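/- arXiv:1805.06590 — 5 statements merged into one kernel-verified Lean document; each statement's English description precedes it below -/
import Mathlib

section
/- Let B = A[X;σ] be an Ore extension of k-algebras, and assume σ extends to a k-algebra automorphism σ̂ of B with σ̂(X) = qX for some q ∈ k* which is not a root of unity. If I is a σ̂-invariant two-sided ideal of B such that for all a ∈ A and n ∈ ℕ, aXⁿ ∈ I implies a ∈ I, then I = (I ∩ A)B. -/
/-- `B = A[X; σ]` is an Ore (skew polynomial) extension: `A` is a subalgebra of `B`,
`X ∈ B` satisfies `X * a = σ(a) * X` for `a ∈ A`, and the powers of `X` form a basis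
of `B` as a left `A`-module (every element of `B` is uniquely `∑ aᵢ Xⁱ` with `aᵢ ∈ A`). -/
structure IsOreExtension (k : Type*) [Field k] {B : Type*} [Ring B] [Algebra k B]
    (A : Subalgebra k B) (σ : A ≃ₐ[k] A) (X : B) : Prop where
  commute : ∀ a : A, X * (a : B) = (σ a : B) * X
  exists_rep : ∀ b : B, ∃ f : ℕ →₀ A, b = f.sum fun i a => (a : B) * X ^ i
  indep : ∀ f : ℕ →₀ A, (f.sum fun i a => (a : B) * X ^ i) = 0 → f = 0

/-- Lemma 5.2(i) of Goodearl–Launois–Lenagan: if `B = A[X;σ]`, `σ̂` is a `k`-algebra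
automorphism of `B` extending `σ` with `σ̂(X) = qX` for `q ∈ k*` not a root of unity,
and `I` is a `σ̂`-invariant two-sided ideal of `B` such that `aXⁿ ∈ I` implies `a ∈ I`
for `a ∈ A` and `n ∈ ℕ`, then `I = (I ∩ A)B`, the two-sided ideal of `B` generated
by `I ∩ A`. -/
theorem ore_invariant_ideal_induced
    (k : Type*) [Field k] {B : Type*} [Ring B] [Algebra k B]
    (A : Subalgebra k B) (σ : A ≃ₐ[k] A) (X : B)
    (hOre : IsOreExtension k A σ X)
    (σhat : B ≃ₐ[k] B)
    (hext : ∀ a : A, σhat (a : B) = (σ a : B))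
    (q : k) (hq0 : q ≠ 0) (hq : ∀ n : ℕ, 0 < n → q ^ n ≠ 1)
    (hX : σhat X = q • X)
    (I : TwoSidedIdeal B)
    (hinv : ∀ x : B, x ∈ I ↔ σhat x ∈ I)
    (hcoef : ∀ (a : A) (n : ℕ), (a : B) * X ^ n ∈ I → (a : B) ∈ I) :
    I = TwoSidedIdeal.span ((I : Set B) ∩ (A : Set B)) := by
  classical
  have smul_mem : ∀ (r : k) (x : B), x ∈ I → r • x ∈ I := fun r x hx => by
    rw [Algebra.smul_def]; exact I.mul_mem_left _ _ hx
  -- main induction: all "coefficients" of an element of I lie in I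
  have key : ∀ (m : ℕ) (s : Finset ℕ), s.card ≤ m → ∀ c : ℕ → A,
      (∑ i ∈ s, (c i : B) * X ^ i) ∈ I → ∀ i ∈ s, (c i : B) ∈ I := by
    intro m
    induction m with
    | zero =>
      intro s hs c _ i hi
      rw [Nat.le_zero, Finset.card_eq_zero] at hs
      subst hs; simp at hi
    | succ m ih =>
      intro s hs c hmem i hi
      have hne : s.Nonempty := ⟨i, hi⟩
      set n := s.max' hne with hn
      have hmem_n : n ∈ s := by rw [hn]; exact s.max'_mem hne
      -- σ̂ of the sum
      have hsigma : σhat (∑ j ∈ s, (c j : B) * X ^ j)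
          = ∑ j ∈ s, q ^ j • ((σ (c j) : B) * X ^ j) := by
        rw [map_sum]
        refine Finset.sum_congr rfl fun j _ => ?_
        rw [map_mul, map_pow, hX, hext, smul_pow, mul_smul_comm]
      -- the auxiliary element y
      have hy : (∑ j ∈ s, ((q ^ n - q ^ j) • σ (c j) : B) * X ^ (j + 1)) ∈ I := by
        have h1 : q ^ n • (X * ∑ j ∈ s, (c j : B) * X ^ j)
            - σhat (∑ j ∈ s, (c j : B) * X ^ j) * X
            = ∑ j ∈ s, ((q ^ n - q ^ j) • σ (c j) : B) * X ^ (j + 1) := by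
          rw [hsigma, Finset.mul_sum, Finset.smul_sum, Finset.sum_mul,
            ← Finset.sum_sub_distrib]
          refine Finset.sum_congr rfl fun j _ => ?_
          rw [← mul_assoc, hOre.commute, mul_assoc, ← pow_succ',
            smul_mul_assoc, mul_assoc, ← pow_succ,
            sub_smul, sub_mul, smul_mul_assoc, smul_mul_assoc]
        rw [← h1]
        exact I.sub_mem (smul_mem _ _ (I.mul_mem_left _ _ hmem))
          (I.mul_mem_right _ _ ((hinv _).mp hmem))
      -- the term at j = n vanishes
      have hy2 : (∑ j ∈ s.erase n, ((q ^ n - q ^ j) • σ (c j) : B) * X ^ (j + 1)) ∈ I := by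
        have h0 := (Finset.add_sum_erase s
          (fun j => ((q ^ n - q ^ j) • σ (c j) : B) * X ^ (j + 1)) hmem_n).symm
        have hterm : ((q ^ n - q ^ n) • σ (c n) : B) * X ^ (n + 1) = 0 := by
          simp
        rw [h0] at hy
        simpa [hterm] using hy
      -- reindex along j ↦ j + 1
      set d : ℕ → A := fun j => (q ^ n - q ^ (j - 1)) • σ (c (j - 1)) with hd
      set t : Finset ℕ := (s.erase n).image (· + 1) with ht
      have hre : (∑ j ∈ t, (d j : B) * X ^ j)
          = ∑ j ∈ s.erase n, ((q ^ n - q ^ j) • σ (c j) : B) * X ^ (j + 1) := by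
        rw [ht, Finset.sum_image (fun a _ b _ h => by simpa using h)]
        simp [hd]
      have hcard : t.card ≤ m := by
        rw [ht, Finset.card_image_of_injective _ (add_left_injective 1),
          Finset.card_erase_of_mem hmem_n]
        omega
      have hId : ∀ j ∈ t, (d j : B) ∈ I := ih t hcard d (by rw [hre]; exact hy2)
      -- coefficients below n are in I
      have hlow : ∀ j ∈ s.erase n, (c j : B) ∈ I := by
        intro j hj
        have hjt : j + 1 ∈ t := Finset.mem_image_of_mem _ hj
        have h2 : ((q ^ n - q ^ j) • (σ (c j) : B)) ∈ I := by
          have := hId _ hjt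
          simpa [hd] using this
        have hjn : j < n := lt_of_le_of_ne (s.le_max' j (Finset.mem_of_mem_erase hj))
          (Finset.ne_of_mem_erase hj)
        have hqne : q ^ n - q ^ j ≠ 0 := by
          intro h
          have hq1 : q ^ n = q ^ j := sub_eq_zero.mp h
          have hj0 : q ^ j ≠ 0 := pow_ne_zero _ hq0
          have h5 : q ^ j * q ^ (n - j) = q ^ j * 1 := by
            rw [← pow_add, show j + (n - j) = n by omega, mul_one, hq1]
          exact hq (n - j) (by omega) (mul_left_cancel₀ hj0 h5)
        have h3 : (σ (c j) : B) ∈ I := by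
          have h6 := smul_mem (q ^ n - q ^ j)⁻¹ _ h2
          rwa [smul_smul, inv_mul_cancel₀ hqne, one_smul] at h6
        exact (hinv _).mpr (by rwa [hext])
      -- top coefficient
      have htop : (c n : B) ∈ I := by
        refine hcoef _ n ?_
        have h7 := (Finset.add_sum_erase s (fun j => (c j : B) * X ^ j) hmem_n).symm
        have h4 : (c n : B) * X ^ n
            = (∑ j ∈ s, (c j : B) * X ^ j) - ∑ j ∈ s.erase n, (c j : B) * X ^ j := by
          rw [h7]; simp
        rw [h4]
        exact I.sub_mem hmem
          (I.finsetSum_mem _ _ fun j hj => I.mul_mem_right _ _ (hlow j hj))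
      rcases eq_or_ne i n with rfl | hne'
      · exact htop
      · exact hlow i (Finset.mem_erase.mpr ⟨hne', hi⟩)
  refine le_antisymm ?_ ?_
  · intro x hx
    obtain ⟨f, rfl⟩ := hOre.exists_rep x
    rw [Finsupp.sum] at hx ⊢
    refine TwoSidedIdeal.finsetSum_mem _ _ _ fun i hi => ?_
    refine TwoSidedIdeal.mul_mem_right _ _ _ (TwoSidedIdeal.subset_span ?_)
    exact ⟨key f.support.card f.support le_rfl f hx i hi, (f i).2⟩
  · intro x hx
    rw [TwoSidedIdeal.mem_span_iff] at hx
    exact hx I fun y hy => hy.1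
end

section
/- Let B = A[X;σ] be an Ore extension of k-algebras, σ̂ an automorphism of B extending σ with σ̂(X) = qX where q ∈ k* is not a root of unity, and I a σ̂-invariant ideal of B such that aXⁿ ∈ I implies a ∈ I for all a ∈ A, n ∈ ℕ. Then the natural map (A/(I∩A))[X̄; σ̄] → B/I is a k-algebra isomorphism. -/
lemma ore_aux
    (k : Type*) [Field k] {B : Type*} [Ring B] [Algebra k B]
    (A : Subalgebra k B) (σ : A ≃ₐ[k] A) (X : B)
    (hcomm : ∀ a : A, X * (a : B) = (σ a : B) * X)
    (σhat : B ≃ₐ[k] B)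
    (hext : ∀ a : A, σhat (a : B) = (σ a : B))
    (q : k) (hq0 : q ≠ 0) (hq : ∀ n : ℕ, 0 < n → q ^ n ≠ 1)
    (hX : σhat X = q • X)
    (I : TwoSidedIdeal B)
    (hinv : ∀ x : B, x ∈ I ↔ σhat x ∈ I)
    (hcoef : ∀ (a : A) (n : ℕ), (a : B) * X ^ n ∈ I → (a : B) ∈ I) :
    ∀ (n : ℕ) (s : Finset ℕ) (c : ℕ → A), s.card = n →
      (∑ i ∈ s, (c i : B) * X ^ i) ∈ I → ∀ i ∈ s, (c i : B) ∈ I := by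
  intro n
  induction n with
  | zero =>
      intro s c hcard hmem i hi
      rw [Finset.card_eq_zero] at hcard
      simp [hcard] at hi
  | succ n ih =>
      intro s c hcard hmem i hi
      have hne : s.Nonempty := Finset.card_pos.mp (by omega)
      obtain ⟨d, hdmem, hdmax⟩ : ∃ d ∈ s, ∀ j ∈ s, j ≤ d :=
        ⟨s.max' hne, s.max'_mem hne, fun j hj => s.le_max' j hj⟩
      -- σhat of the sum
      have hσs : σhat (∑ i ∈ s, (c i : B) * X ^ i)
          = ∑ i ∈ s, q ^ i • ((σ (c i) : B) * X ^ i) := by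
        rw [map_sum]
        refine Finset.sum_congr rfl fun i _ => ?_
        rw [map_mul, map_pow, hext, hX, smul_pow, mul_smul_comm]
      have hXs : X * (∑ i ∈ s, (c i : B) * X ^ i)
          = ∑ i ∈ s, (σ (c i) : B) * X ^ (i + 1) := by
        rw [Finset.mul_sum]
        refine Finset.sum_congr rfl fun i _ => ?_
        rw [← mul_assoc, hcomm, mul_assoc, ← pow_succ']
      have h1 : σhat (∑ i ∈ s, (c i : B) * X ^ i) * X ∈ I :=
        I.mul_mem_right _ _ ((hinv _).mp hmem)
      have h2 : X * (∑ i ∈ s, (c i : B) * X ^ i) ∈ I := I.mul_mem_left _ _ hmem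
      have hsmul : ∀ (r : k) (x : B), x ∈ I → r • x ∈ I := by
        intro r x hx
        rw [Algebra.smul_def]
        exact I.mul_mem_left _ _ hx
      have hsmul' : ∀ (r : k) (x : B), r ≠ 0 → r • x ∈ I → x ∈ I := by
        intro r x hr hx
        have := hsmul r⁻¹ _ hx
        rwa [smul_smul, inv_mul_cancel₀ hr, one_smul] at this
      have hkey : (∑ i ∈ s.erase d,
          (((q ^ i - q ^ d) • σ (c i) : A) : B) * X ^ (i + 1)) ∈ I := by
        have he : (∑ i ∈ s.erase d,
            (((q ^ i - q ^ d) • σ (c i) : A) : B) * X ^ (i + 1))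
            = σhat (∑ i ∈ s, (c i : B) * X ^ i) * X
              - q ^ d • (X * (∑ i ∈ s, (c i : B) * X ^ i)) := by
          rw [hσs, hXs, Finset.sum_mul, Finset.smul_sum, ← Finset.sum_sub_distrib,
            ← Finset.sum_erase (s := s)
              (f := fun i => q ^ i • ((σ (c i) : B) * X ^ i) * X
                - q ^ d • ((σ (c i) : B) * X ^ (i + 1))) (a := d)
              (by simp only [smul_mul_assoc, mul_assoc, ← pow_succ, sub_self])]
          refine Finset.sum_congr rfl fun i _ => ?_
          rw [SetLike.val_smul, smul_mul_assoc, sub_smul]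
          simp only [smul_mul_assoc, mul_assoc, ← pow_succ]
        rw [he]
        exact I.sub_mem h1 (hsmul _ _ h2)
      -- apply the induction hypothesis to the shifted sum
      have hcard' : ((s.erase d).image (· + 1)).card = n := by
        rw [Finset.card_image_of_injective _ (fun a b hab => by omega),
          Finset.card_erase_of_mem hdmem, hcard]
        omega
      have hsum' : (∑ j ∈ (s.erase d).image (· + 1),
          ((fun j => (q ^ (j - 1) - q ^ d) • σ (c (j - 1))) j : B) * X ^ j) ∈ I := by
        rw [Finset.sum_image (fun a _ b _ hab => by omega)]
        simpa using hkey
      have hIH := ih ((s.erase d).image (· + 1))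
        (fun j => (q ^ (j - 1) - q ^ d) • σ (c (j - 1))) hcard' hsum'
      have hlow : ∀ i ∈ s.erase d, (c i : B) ∈ I := by
        intro i hi'
        have hid : i ≠ d := Finset.ne_of_mem_erase hi'
        have his : i ∈ s := Finset.mem_of_mem_erase hi'
        have hilt : i < d := lt_of_le_of_ne (hdmax i his) hid
        have := hIH (i + 1) (Finset.mem_image_of_mem _ hi')
        simp only [Nat.add_sub_cancel] at this
        have hrne : q ^ i - q ^ d ≠ 0 := by
          intro h
          have hqq : q ^ i = q ^ d := sub_eq_zero.mp h
          have : q ^ (d - i) = 1 := by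
            have : q ^ i * q ^ (d - i) = q ^ i * 1 := by
              rw [mul_one, ← pow_add]
              rw [hqq]
              congr 1
              omega
            exact mul_left_cancel₀ (pow_ne_zero i hq0) this
          exact hq (d - i) (by omega) this
        have hσ : (σ (c i) : B) ∈ I := by
          apply hsmul' _ _ hrne
          rwa [SetLike.val_smul] at this
        rw [hinv, hext]
        exact hσ
      rcases eq_or_ne i d with rfl | hid
      · -- top coefficient
        have hrest : (∑ j ∈ s.erase i, (c j : B) * X ^ j) ∈ I :=
          I.finsetSum_mem _ _ fun j hj => I.mul_mem_right _ _ (hlow j hj)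
        have htop : (c i : B) * X ^ i ∈ I := by
          have : (c i : B) * X ^ i
              = (∑ j ∈ s, (c j : B) * X ^ j) - ∑ j ∈ s.erase i, (c j : B) * X ^ j := by
            rw [← Finset.add_sum_erase _ _ hdmem, add_sub_cancel_right]
          rw [this]
          exact I.sub_mem hmem hrest
        exact hcoef _ _ htop
      · exact hlow i (Finset.mem_erase.mpr ⟨hid, hi⟩)

/-- Lemma 5.2(ii) of Goodearl–Launois–Lenagan: with `B = A[X;σ]`, `σ̂` an automorphism
of `B` extending `σ` with `σ̂(X) = qX` (`q ∈ k*` not a root of unity), and `I` a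
`σ̂`-invariant two-sided ideal of `B` such that `aXⁿ ∈ I` implies `a ∈ I`, the natural
map `(A/(I∩A))[X̄;σ̄] → B/I` is a `k`-algebra isomorphism.

Since this natural map sends the class of `∑ (aᵢ + (I∩A)) X̄ⁱ` to `(∑ aᵢ Xⁱ) + I` and
is surjective (every element of `B` is `∑ aᵢ Xⁱ`), it is an isomorphism precisely when
a polynomial `∑ aᵢ Xⁱ` lies in `I` if and only if all its coefficients `aᵢ` lie in `I`;
this is the statement formalized below. -/
theorem ore_quotient_is_ore_extension
    (k : Type*) [Field k] {B : Type*} [Ring B] [Algebra k B]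
    (A : Subalgebra k B) (σ : A ≃ₐ[k] A) (X : B)
    (hOre : IsOreExtension k A σ X)
    (σhat : B ≃ₐ[k] B)
    (hext : ∀ a : A, σhat (a : B) = (σ a : B))
    (q : k) (hq0 : q ≠ 0) (hq : ∀ n : ℕ, 0 < n → q ^ n ≠ 1)
    (hX : σhat X = q • X)
    (I : TwoSidedIdeal B)
    (hinv : ∀ x : B, x ∈ I ↔ σhat x ∈ I)
    (hcoef : ∀ (a : A) (n : ℕ), (a : B) * X ^ n ∈ I → (a : B) ∈ I) :
    ∀ f : ℕ →₀ A, (f.sum fun i a => (a : B) * X ^ i) ∈ I ↔ ∀ i : ℕ, (f i : B) ∈ I := by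
  intro f
  constructor
  · intro hmem i
    by_cases hi : i ∈ f.support
    · exact ore_aux k A σ X hOre.commute σhat hext q hq0 hq hX I hinv hcoef
        f.support.card f.support (fun j => f j) rfl hmem i hi
    · rw [Finsupp.notMem_support_iff.mp hi]
      simpa using I.zero_mem
  · intro h
    exact I.finsetSum_mem _ _ fun i _ => I.mul_mem_right _ _ (h i)
end

section
/- Let B ⊆ A be k-algebras that are prime right Goldie rings, such that every regular element of B is regular in A, and A is finitely generated as a right B-module. Then the right Goldie quotient ring Fract(A) is finitely generated as a right module over Fract(B). -/
/-- A ring is prime if the product of two nonzero two-sided ideals is nonzero;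
elementwise: `aRb = 0` implies `a = 0` or `b = 0`. -/
def IsPrimeRing' (R : Type*) [Ring R] : Prop :=
  Nontrivial R ∧ ∀ a b : R, (∀ r : R, a * r * b = 0) → a = 0 ∨ b = 0

/-- A ring is right Goldie if it has the ascending chain condition on right
annihilators and contains no infinite direct sum of nonzero right ideals. -/
def IsRightGoldie (R : Type*) [Ring R] : Prop :=
  (∀ f : ℕ → Set R, (∀ n, ∃ S : Set R, f n = {r : R | ∀ s ∈ S, s * r = 0}) →
      (∀ n, f n ⊆ f (n + 1)) → ∃ N, ∀ n, N ≤ n → f n = f N) ∧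
  ¬ ∃ I : ℕ → Submodule Rᵐᵒᵖ R, (∀ n, I n ≠ ⊥) ∧ iSupIndep I

/-- `f : A →+* Q` realizes `Q` as the classical right quotient ring of `A`:
`f` is injective, regular elements of `A` become units, and every element of `Q`
is a right fraction `f(a) f(s)⁻¹`, equivalently `x * f s = f a`. -/
def IsClassicalRightQuotientRing {A Q : Type*} [Ring A] [Ring Q] (f : A →+* Q) : Prop :=
  Function.Injective f ∧ (∀ a : A, IsRegular a → IsUnit (f a)) ∧
    ∀ x : Q, ∃ a s : A, IsRegular s ∧ x * f s = f a

namespace GoldieAux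

variable {R : Type*} [Ring R]

/-- right annihilator of an element -/
def rAnn (a : R) : Set R := {r | a * r = 0}

lemma rAnn_isAnn (a : R) : ∃ S : Set R, rAnn a = {r : R | ∀ s ∈ S, s * r = 0} := by
  refine ⟨{a}, ?_⟩
  ext r; simp [rAnn]

/-- maximal right annihilators exist -/
lemma exists_max_rAnn (hG : IsRightGoldie R) (S : Set R) (hS : S.Nonempty) :
    ∃ x ∈ S, ∀ y ∈ S, rAnn x ⊆ rAnn y → rAnn y = rAnn x := by
  by_contra hcon
  push_neg at hcon
  have hstep : ∀ x : {x // x ∈ S}, ∃ y : {x // x ∈ S},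
      rAnn x.1 ⊆ rAnn y.1 ∧ rAnn y.1 ≠ rAnn x.1 := by
    rintro ⟨x, hx⟩
    obtain ⟨y, hy, h1, h2⟩ := hcon x hx
    exact ⟨⟨y, hy⟩, h1, h2⟩
  choose nxt hnxt1 hnxt2 using hstep
  let seq : ℕ → {x // x ∈ S} := fun n => nxt^[n] ⟨hS.choose, hS.choose_spec⟩
  have hseq : ∀ n, seq (n + 1) = nxt (seq n) := by
    intro n
    simp only [seq, Function.iterate_succ_apply']
  obtain ⟨N, hN⟩ := hG.1 (fun n => rAnn (seq n).1)
    (fun n => rAnn_isAnn _)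
    (fun n => by show rAnn (seq n).1 ⊆ rAnn (seq (n+1)).1; rw [hseq n]; exact hnxt1 (seq n))
  have h1 := hN (N + 1) (by omega)
  rw [hseq N] at h1
  exact hnxt2 (seq N) h1

/-- the chain of annihilators of powers stabilizes -/
lemma rAnn_pow_stab (hG : IsRightGoldie R) (x : R) :
    ∃ N, 1 ≤ N ∧ ∀ m, N ≤ m → rAnn (x ^ m) = rAnn (x ^ N) := by
  obtain ⟨N₀, hN₀⟩ := hG.1 (fun n => rAnn (x ^ (n + 1))) (fun n => rAnn_isAnn _)
    (by
      intro n r hr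
      have : x ^ (n + 1) * r = 0 := hr
      show x ^ (n + 2) * r = 0
      rw [show x ^ (n+2) = x * x ^ (n+1) by rw [← pow_succ']]
      rw [mul_assoc, this, mul_zero])
  refine ⟨N₀ + 1, by omega, ?_⟩
  intro m hm
  have := hN₀ (m - 1) (by omega)
  simpa [show m - 1 + 1 = m by omega] using this

lemma mul_pow_aux (x y : R) (n : ℕ) : (x * y) ^ (n + 1) = x * (y * x) ^ n * y := by
  induction n with
  | zero => simp
  | succ n ih =>
    rw [pow_succ, ih, pow_succ]
    simp only [mul_assoc]


/-- in a prime ring with ACC on right annihilators, `aR` is not nil for `a ≠ 0` -/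
lemma exists_nonnil (hP : IsPrimeRing' R) (hG : IsRightGoldie R) (a : R) (ha : a ≠ 0) :
    ∃ b, ¬ IsNilpotent (a * b) := by
  haveI : Nontrivial R := hP.1
  by_contra hcon
  push_neg at hcon
  have hnil : ∀ b : R, IsNilpotent (b * a) := by
    intro b
    obtain ⟨n, hn⟩ := hcon b
    exact ⟨n + 1, by rw [mul_pow_aux, hn, mul_zero, zero_mul]⟩
  set S : Set R := {x | (∃ b, x = b * a) ∧ x ≠ 0} with hS
  have hSne : S.Nonempty := ⟨a, ⟨1, (one_mul a).symm⟩, ha⟩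
  obtain ⟨x, ⟨⟨b₀, hb₀⟩, hx0⟩, hmax⟩ := exists_max_rAnn hG S hSne
  have hkey : ∀ c, x * c * x = 0 := by
    classical
    intro c
    set w := c * x with hw
    by_cases hw0 : w = 0
    · rw [mul_assoc, ← hw, hw0, mul_zero]
    · have hwnil : IsNilpotent w := by
        rw [hw, hb₀, ← mul_assoc]
        exact hnil (c * b₀)
      obtain ⟨m, hm⟩ := hwnil
      have hex : ∃ j, w ^ j = 0 := ⟨m, hm⟩
      set K := Nat.find hex with hK
      have hK0 : w ^ K = 0 := Nat.find_spec hex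
      have hKne0 : K ≠ 0 := by
        intro h; rw [h, pow_zero] at hK0; exact one_ne_zero hK0
      have hKne1 : K ≠ 1 := by
        intro h; rw [h, pow_one] at hK0; exact hw0 hK0
      set n := K - 1 with hn
      have hn1 : 1 ≤ n := by omega
      have hwn : w ^ n ≠ 0 := Nat.find_min hex (by omega)
      have hwn1 : w ^ (n + 1) = 0 := by
        rw [show n + 1 = K by omega]; exact hK0
      have hwnS : w ^ n ∈ S := by
        refine ⟨⟨w ^ (n - 1) * (c * b₀), ?_⟩, hwn⟩
        rw [show n = (n - 1) + 1 by omega, pow_succ, hw, hb₀]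
        simp [mul_assoc]
      have hsub : rAnn x ⊆ rAnn (w ^ n) := by
        intro r hr
        have hxr : x * r = 0 := hr
        show w ^ n * r = 0
        rw [show n = (n - 1) + 1 by omega, pow_succ, hw]
        rw [mul_assoc, mul_assoc, hxr, mul_zero, mul_zero]
      have heq := hmax (w ^ n) hwnS hsub
      have hwin : w ∈ rAnn (w ^ n) := by
        show w ^ n * w = 0
        rw [← pow_succ]; exact hwn1
      rw [heq] at hwin
      have : x * w = 0 := hwin
      rw [hw, ← mul_assoc] at this
      exact this
  rcases hP.2 x x hkey with h | h <;> exact hx0 h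

/-- every nonzero element has a right multiple `y ≠ 0` with `rAnn (y*y) ⊆ rAnn y` -/
lemma exists_good (hP : IsPrimeRing' R) (hG : IsRightGoldie R) (a : R) (ha : a ≠ 0) :
    ∃ y, (∃ c, y = a * c) ∧ y ≠ 0 ∧ rAnn (y * y) ⊆ rAnn y := by
  obtain ⟨b, hb⟩ := exists_nonnil hP hG a ha
  set x := a * b with hx
  obtain ⟨N, hN1, hN⟩ := rAnn_pow_stab hG x
  refine ⟨x ^ N, ⟨b * x ^ (N - 1), ?_⟩, ?_, ?_⟩
  · conv_lhs => rw [show N = (N - 1) + 1 by omega, pow_succ']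
    rw [hx, mul_assoc]
  · intro h; exact hb ⟨N, h⟩
  · rw [← pow_add, hN (N + N) (by omega)]


/-- right ideal, as a set -/
def RId (E : Set R) : Prop :=
  (0 : R) ∈ E ∧ (∀ x ∈ E, ∀ y ∈ E, x + y ∈ E) ∧ (∀ x ∈ E, ∀ r : R, x * r ∈ E)

/-- essential right ideal, as a set -/
def Ess (E : Set R) : Prop :=
  RId E ∧ ∀ a : R, a ≠ 0 → ∃ r, a * r ∈ E ∧ a * r ≠ 0

lemma RId.neg_mem {E : Set R} (hE : RId E) {x : R} (hx : x ∈ E) : -x ∈ E := by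
  have := hE.2.2 x hx (-1)
  rwa [mul_neg_one] at this

lemma gen1 :
    ∀ s : Finset ℕ, ∀ w r : ℕ → R, (∀ i ∈ s, ∀ j ∈ s, i < j → w i * w j = 0) →
      (∀ i ∈ s, rAnn (w i * w i) ⊆ rAnn (w i)) →
      (∑ i ∈ s, w i * r i) = 0 → ∀ i ∈ s, w i * r i = 0 := by
  classical
  intro s
  induction s using Finset.strongInduction with
  | _ s ih =>
    intro w r hord hann hsum i hi
    rcases Finset.eq_empty_or_nonempty s with rfl | hne
    · exact absurd hi (by simp)
    set m := s.min' hne with hm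
    have hmmem : m ∈ s := s.min'_mem hne
    have h1 : w m * (w m * r m) = 0 := by
      have h2 : (∑ j ∈ s, w m * (w j * r j)) = w m * (w m * r m) :=
        Finset.sum_eq_single_of_mem m hmmem (fun j hj hjm => by
          have hmj : m < j := lt_of_le_of_ne (s.min'_le j hj) (Ne.symm hjm)
          rw [← mul_assoc, hord m hmmem j hj hmj, zero_mul])
      rw [← h2, ← Finset.mul_sum, hsum, mul_zero]
    have hwm : w m * r m = 0 := by
      have : r m ∈ rAnn (w m * w m) := by
        show (w m * w m) * r m = 0
        rw [mul_assoc]; exact h1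
      exact hann m hmmem this
    have hrest : (∑ j ∈ s.erase m, w j * r j) = 0 := by
      rw [Finset.sum_erase_eq_sub hmmem, hsum, hwm, sub_zero]
    by_cases him : i = m
    · rw [him]; exact hwm
    · exact ih (s.erase m) (Finset.erase_ssubset hmmem) w r
        (fun i hi j hj => hord i (Finset.mem_of_mem_erase hi) j (Finset.mem_of_mem_erase hj))
        (fun i hi => hann i (Finset.mem_of_mem_erase hi)) hrest i
        (Finset.mem_erase.mpr ⟨him, hi⟩)

lemma pow_cancel {c : R} (hc : ∀ r, c * r = 0 → r = 0) :
    ∀ k, ∀ x : R, c ^ k * x = 0 → x = 0 := by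
  intro k
  induction k with
  | zero => intro x hx; simpa using hx
  | succ k ih =>
    intro x hx
    rw [pow_succ, mul_assoc] at hx
    exact hc x (ih _ hx)

lemma gen2 (c a : R) (hc : ∀ r, c * r = 0 → r = 0)
    (hdisj : ∀ r r', a * r = c * r' → a * r = 0) :
    ∀ s : Finset ℕ, ∀ b : ℕ → R, (∑ i ∈ s, c ^ i * (a * b i)) = 0 → ∀ i ∈ s, a * b i = 0 := by
  classical
  suffices H : ∀ n : ℕ, ∀ s : Finset ℕ, s.card ≤ n → ∀ b : ℕ → R,
      (∑ i ∈ s, c ^ i * (a * b i)) = 0 → ∀ i ∈ s, a * b i = 0 by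
    intro s; exact H s.card s le_rfl
  intro n
  induction n with
  | zero =>
    intro s hs b hsum i hi
    rw [Finset.card_eq_zero.mp (Nat.le_zero.mp hs)] at hi
    exact absurd hi (by simp)
  | succ n ih =>
    intro s hcard b hsum i hi
    have hne : s.Nonempty := ⟨i, hi⟩
    set m := s.min' hne with hm
    have hmmem : m ∈ s := s.min'_mem hne
    have hmle : ∀ j ∈ s, m ≤ j := fun j hj => s.min'_le j hj
    -- cancel c^m
    have h1 : c ^ m * (∑ j ∈ s, c ^ (j - m) * (a * b j)) = 0 := by
      rw [Finset.mul_sum]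
      rw [← hsum]
      exact Finset.sum_congr rfl (fun j hj => by
        rw [← mul_assoc, ← pow_add, show m + (j - m) = j by
          have := hmle j hj; omega])
    have hX : (∑ j ∈ s, c ^ (j - m) * (a * b j)) = 0 := pow_cancel hc m _ h1
    have hXsplit : a * b m + (∑ j ∈ s.erase m, c ^ (j - m) * (a * b j)) = 0 := by
      rw [Finset.sum_erase_eq_sub hmmem, hX, Nat.sub_self, pow_zero, one_mul]
      abel
    set Y := ∑ j ∈ s.erase m, c ^ (j - m - 1) * (a * b j) with hY
    have hcY : (∑ j ∈ s.erase m, c ^ (j - m) * (a * b j)) = c * Y := by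
      rw [hY, Finset.mul_sum]
      exact Finset.sum_congr rfl (fun j hj => by
        have hmj : m < j := lt_of_le_of_ne (hmle j (Finset.mem_of_mem_erase hj))
          (Ne.symm (Finset.ne_of_mem_erase hj))
        conv_lhs => rw [show j - m = j - m - 1 + 1 by omega, pow_succ', mul_assoc])
    have habm : a * b m = 0 := by
      refine hdisj (b m) (-Y) ?_
      rw [hcY] at hXsplit
      rw [mul_neg]
      exact eq_neg_of_add_eq_zero_left hXsplit
    have hY0 : Y = 0 := by
      apply hc
      rw [← hcY]
      have := hXsplit
      rw [habm, zero_add] at this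
      exact this
    by_cases him : i = m
    · rw [him]; exact habm
    · -- reindex the remaining sum
      have himem : i ∈ s.erase m := Finset.mem_erase.mpr ⟨him, hi⟩
      set s' := (s.erase m).image (fun j => j - (m + 1)) with hs'
      set b' : ℕ → R := fun j => b (j + (m + 1)) with hb'
      have hmlt : ∀ j ∈ s.erase m, m + 1 ≤ j := fun j hj => by
        have := hmle j (Finset.mem_of_mem_erase hj)
        have := Finset.ne_of_mem_erase hj
        omega
      have hsum' : (∑ j ∈ s', c ^ j * (a * b' j)) = 0 := by
        rw [hs', Finset.sum_image (fun x hx y hy hxy => by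
          have := hmlt x hx; have := hmlt y hy; omega)]
        rw [← hY0, hY]
        exact Finset.sum_congr rfl (fun j hj => by
          have := hmlt j hj
          rw [hb']
          simp only []
          rw [show j - (m + 1) + (m + 1) = j by omega,
            show j - (m + 1) = j - m - 1 by omega])
      have hcard' : s'.card ≤ n := by
        have h3 := Finset.card_image_le (s := s.erase m) (f := fun j => j - (m + 1))
        have h4 := Finset.card_erase_of_mem hmmem
        have h5 : 0 < s.card := Finset.card_pos.mpr hne
        have h6 : s'.card = (Finset.image (fun j => j - (m + 1)) (s.erase m)).card := rfl
        omega
      have := ih s' hcard' b' hsum' (i - (m + 1))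
        (Finset.mem_image.mpr ⟨i, himem, rfl⟩)
      rw [hb'] at this
      simpa [show i - (m + 1) + (m + 1) = i by have := hmlt i himem; omega] using this

lemma gen3 (J : ℕ → Set R) (hmono : ∀ k l, k ≤ l → J l ⊆ J k) (hJ : ∀ n, RId (J n))
    (z : ℕ → R) (hz : ∀ n, z n ∈ J n) (hd : ∀ n r, z n * r ∈ J (n + 1) → z n * r = 0) :
    ∀ s : Finset ℕ, ∀ r : ℕ → R, (∑ i ∈ s, z i * r i) = 0 → ∀ i ∈ s, z i * r i = 0 := by
  classical
  intro s
  induction s using Finset.strongInduction with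
  | _ s ih =>
    intro r hsum i hi
    rcases Finset.eq_empty_or_nonempty s with rfl | hne
    · exact absurd hi (by simp)
    set m := s.min' hne with hm
    have hmmem : m ∈ s := s.min'_mem hne
    have hrestmem : (∑ j ∈ s.erase m, z j * r j) ∈ J (m + 1) := by
      refine Finset.sum_induction _ (fun x => x ∈ J (m + 1))
        (fun a b ha hb => (hJ (m+1)).2.1 a ha b hb) (hJ (m+1)).1 ?_
      intro j hj
      have hmj : m + 1 ≤ j := by
        have h5 := s.min'_le j (Finset.mem_of_mem_erase hj)
        have h6 := Finset.ne_of_mem_erase hj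
        omega
      exact hmono (m + 1) j hmj ((hJ j).2.2 (z j) (hz j) (r j))
    have hzm : z m * r m = 0 := by
      apply hd
      have h7 : z m * r m = -(∑ j ∈ s.erase m, z j * r j) := by
        have h8 : (∑ j ∈ s.erase m, z j * r j) = -(z m * r m) := by
          rw [Finset.sum_erase_eq_sub hmmem, hsum, zero_sub]
        rw [h8, neg_neg]
      rw [h7]
      exact (hJ (m + 1)).neg_mem hrestmem
    have hrest : (∑ j ∈ s.erase m, z j * r j) = 0 := by
      rw [Finset.sum_erase_eq_sub hmmem, hsum, hzm, sub_zero]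
    by_cases him : i = m
    · rw [him]; exact hzm
    · exact ih (s.erase m) (Finset.erase_ssubset hmmem) r hrest i
        (Finset.mem_erase.mpr ⟨him, hi⟩)

/-- From term-wise directness, deduce lattice independence of the cyclic right ideals. -/
lemma indep_of_terms (a : ℕ → R)
    (H : ∀ s : Finset ℕ, ∀ r : ℕ → R, (∑ i ∈ s, a i * r i) = 0 → ∀ i ∈ s, a i * r i = 0) :
    iSupIndep (fun n => Submodule.span Rᵐᵒᵖ {a n}) := by
  classical
  rw [iSupIndep_def]
  intro n
  rw [Submodule.disjoint_def]
  intro x hxn hxsup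
  obtain ⟨β, hβ⟩ := Submodule.mem_span_singleton.mp hxn
  rw [Submodule.mem_iSup_iff_exists_finsupp] at hxsup
  obtain ⟨μ, hμmem, hμsum⟩ := hxsup
  have hn0 : μ n = 0 := by
    have h8 := hμmem n
    rw [iSup_neg (by simp)] at h8
    simpa using h8
  have hmem : ∀ j, μ j ∈ Submodule.span Rᵐᵒᵖ {a j} := by
    intro j
    by_cases hj : j = n
    · rw [hj, hn0]; exact Submodule.zero_mem _
    · have h9 := hμmem j
      rwa [iSup_pos hj] at h9
  choose γ hγ using fun j => Submodule.mem_span_singleton.mp (hmem j)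
  have hns : n ∉ μ.support := by simp [hn0]
  set r : ℕ → R := Function.update (fun j => (γ j).unop) n (-β.unop) with hr
  have hrn : r n = -β.unop := by rw [hr, Function.update_self]
  have h12 : a n * β.unop = x := by rw [← hβ]; rfl
  have hsum0 : (∑ i ∈ insert n μ.support, a i * r i) = 0 := by
    rw [Finset.sum_insert hns]
    have h10 : ∀ j ∈ μ.support, a j * r j = μ j := by
      intro j hj
      have hjn : j ≠ n := fun hcontra => hns (hcontra ▸ hj)
      rw [hr, Function.update_of_ne hjn]
      rw [← hγ j]
      rfl
    rw [Finset.sum_congr rfl h10]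
    have h11 : (∑ j ∈ μ.support, μ j) = x := hμsum
    rw [h11, hrn, mul_neg, h12, neg_add_cancel]
  have h13 := H (insert n μ.support) r hsum0 n (Finset.mem_insert_self n _)
  rw [hrn, mul_neg, neg_eq_zero] at h13
  rw [← h12, h13]


lemma ess_mono {E E' : Set R} (hE : Ess E) (hsub : E ⊆ E') (hE' : RId E') : Ess E' :=
  ⟨hE', fun a ha => by
    obtain ⟨r, h1, h2⟩ := hE.2 a ha
    exact ⟨r, hsub h1, h2⟩⟩

lemma ess_preimage {E : Set R} (hE : Ess E) (b : R) : Ess {r | b * r ∈ E} := by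
  constructor
  · refine ⟨?_, ?_, ?_⟩
    · show b * 0 ∈ E; rw [mul_zero]; exact hE.1.1
    · intro x hx y hy; show b * (x + y) ∈ E; rw [mul_add]; exact hE.1.2.1 _ hx _ hy
    · intro x hx r; show b * (x * r) ∈ E; rw [← mul_assoc]; exact hE.1.2.2 _ hx r
  · intro a ha
    by_cases hba : b * a = 0
    · refine ⟨1, ?_, by rwa [mul_one]⟩
      show b * (a * 1) ∈ E
      rw [mul_one, hba]; exact hE.1.1
    · obtain ⟨r, h1, h2⟩ := hE.2 (b * a) hba
      refine ⟨r, ?_, ?_⟩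
      · show b * (a * r) ∈ E; rw [← mul_assoc]; exact h1
      · intro h0; apply h2; rw [mul_assoc, h0, mul_zero]

/-- every essential right ideal contains a right regular element -/
lemma ess_exists_rreg (hP : IsPrimeRing' R) (hG : IsRightGoldie R) (E : Set R) (hE : Ess E) :
    ∃ c ∈ E, ∀ r, c * r = 0 → r = 0 := by
  classical
  haveI : Nontrivial R := hP.1
  by_contra hcon
  push_neg at hcon
  set Q : (ℕ → R) → ℕ → R → Prop := fun v n y =>
    y ∈ E ∧ y ≠ 0 ∧ rAnn (y * y) ⊆ rAnn (y) ∧ ∀ m < n, v m * y = 0 with hQ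
  have EXT : ∀ (v : ℕ → R) (n : ℕ),
      (∀ m, m < n → v m ∈ E ∧ v m ≠ 0 ∧ rAnn (v m * v m) ⊆ rAnn (v m) ∧
        ∀ k < m, v k * v m = 0) → ∃ y, Q v n y := by
    intro v n hv
    by_cases hF : ∃ z, (∀ m < n, v m * z = 0) ∧ z ≠ 0
    · obtain ⟨z, hzF, hz0⟩ := hF
      obtain ⟨r, hrE, hr0⟩ := hE.2 z hz0
      obtain ⟨y, ⟨c', hc'⟩, hy0, hyann⟩ := exists_good hP hG (z * r) hr0
      refine ⟨y, ?_, hy0, hyann, ?_⟩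
      · rw [hc']; exact hE.1.2.2 _ hrE c'
      · intro m hm
        rw [hc', ← mul_assoc, ← mul_assoc, hzF m hm, zero_mul, zero_mul]
    · push_neg at hF
      exfalso
      set cc := ∑ m ∈ Finset.range n, v m with hcc
      have hccE : cc ∈ E := by
        rw [hcc]
        refine Finset.sum_induction _ (· ∈ E)
          (fun x y hx hy => hE.1.2.1 x hx y hy) hE.1.1 ?_
        intro m hm
        exact (hv m (Finset.mem_range.mp hm)).1
      obtain ⟨r, hr1, hr2⟩ := hcon cc hccE
      apply hr2
      apply hF r
      intro m hm
      have hsum : (∑ i ∈ Finset.range n, v i * r) = 0 := by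
        rw [← Finset.sum_mul, ← hcc, hr1]
      exact gen1 (Finset.range n) v (fun _ => r)
        (fun i hi j hj hij => (hv j (Finset.mem_range.mp hj)).2.2.2 i hij)
        (fun i hi => (hv i (Finset.mem_range.mp hi)).2.2.1)
        hsum m (Finset.mem_range.mpr hm)
  set pick : (ℕ → R) → ℕ → R := fun v n =>
    if hh : ∃ y, Q v n y then hh.choose else 0 with hpick
  set approx : ℕ → (ℕ → R) := fun n => Nat.rec (motive := fun _ => ℕ → R)
    (fun _ => 0) (fun k vp => Function.update vp k (pick vp k)) n with happrox
  have happstep : ∀ n, approx (n + 1) = Function.update (approx n) n (pick (approx n) n) :=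
    fun n => rfl
  set a : ℕ → R := fun n => approx (n + 1) n with ha
  have hagree : ∀ n m, m < n → approx n m = a m := by
    intro n
    induction n with
    | zero => omega
    | succ n ih =>
      intro m hm
      by_cases hmn : m = n
      · subst hmn; rfl
      · rw [happstep, Function.update_of_ne hmn]
        exact ih m (by omega)
  have hInv : ∀ m, a m ∈ E ∧ a m ≠ 0 ∧ rAnn (a m * a m) ⊆ rAnn (a m) ∧
      ∀ k < m, a k * a m = 0 := by
    intro m
    induction m using Nat.strong_induction_on with
    | _ m ih =>
      have hext := EXT (approx m) m (by
        intro j hj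
        rw [hagree m j hj]
        obtain ⟨h1, h2, h3, h4⟩ := ih j hj
        exact ⟨h1, h2, h3, fun k hk => by
          rw [hagree m k (lt_trans hk hj)]; exact h4 k hk⟩)
      have hpickeq : a m = (hext).choose := by
        rw [ha]
        show approx (m + 1) m = _
        rw [happstep, Function.update_self]
        show pick (approx m) m = _
        rw [hpick]
        exact dif_pos hext
      have hQa : Q (approx m) m (a m) := by rw [hpickeq]; exact hext.choose_spec
      obtain ⟨h1, h2, h3, h4⟩ := hQa
      exact ⟨h1, h2, h3, fun k hk => by rw [← hagree m k hk]; exact h4 k hk⟩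
  apply hG.2
  refine ⟨fun n => Submodule.span Rᵐᵒᵖ {a n}, fun n => ?_, ?_⟩
  · intro hbot
    have hmem : a n ∈ (⊥ : Submodule Rᵐᵒᵖ R) :=
      hbot ▸ Submodule.mem_span_singleton_self (a n)
    exact (hInv n).2.1 (by simpa using hmem)
  · exact indep_of_terms a (fun s r hsum i hi => gen1 s a r
      (fun i _ j _ hij => (hInv j).2.2.2 i hij)
      (fun i _ => (hInv i).2.2.1) hsum i hi)


/-- a right regular element generates an essential right ideal -/
lemma rreg_ess (hG : IsRightGoldie R) (c : R) (hc : ∀ r, c * r = 0 → r = 0) :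
    Ess {x : R | ∃ r, x = c * r} := by
  constructor
  · refine ⟨⟨0, (mul_zero c).symm⟩, ?_, ?_⟩
    · rintro x ⟨r, rfl⟩ y ⟨r', rfl⟩; exact ⟨r + r', (mul_add _ _ _).symm⟩
    · rintro x ⟨r, rfl⟩ t; exact ⟨r * t, mul_assoc _ _ _⟩
  · intro a ha
    by_contra hcon
    push_neg at hcon
    have hdisj : ∀ r r', a * r = c * r' → a * r = 0 := fun r r' hrr => hcon r ⟨r', hrr⟩
    have hpow : ∀ n, c ^ n * a ≠ 0 := by
      intro n
      induction n with
      | zero => simpa using ha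
      | succ n ih =>
        intro hzero
        rw [pow_succ', mul_assoc] at hzero
        exact ih (hc _ hzero)
    apply hG.2
    refine ⟨fun n => Submodule.span Rᵐᵒᵖ {c ^ n * a}, fun n => ?_, ?_⟩
    · intro hbot
      have hmem : c ^ n * a ∈ (⊥ : Submodule Rᵐᵒᵖ R) :=
        hbot ▸ Submodule.mem_span_singleton_self _
      exact hpow n (by simpa using hmem)
    · apply indep_of_terms
      intro s r hsum i hi
      have hsum' : (∑ j ∈ s, c ^ j * (a * r j)) = 0 := by
        rw [← hsum]
        exact Finset.sum_congr rfl fun j _ => (mul_assoc _ _ _).symm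
      have habi := gen2 c a hc hdisj s r hsum' i hi
      show (c ^ i * a) * r i = 0
      rw [mul_assoc, habi, mul_zero]

/-- Mewborn–Winton: an element with essential right annihilator is zero -/
lemma ess_rAnn_eq_zero (hP : IsPrimeRing' R) (hG : IsRightGoldie R) (x : R)
    (hx : Ess (rAnn x)) : x = 0 := by
  have nilp : ∀ y : R, Ess (rAnn y) → IsNilpotent y := by
    intro y hy
    obtain ⟨N, hN1, hN⟩ := rAnn_pow_stab hG y
    by_cases h0 : y ^ N = 0
    · exact ⟨N, h0⟩
    · exfalso
      obtain ⟨r, h1, h2⟩ := hy.2 (y ^ N) h0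
      have h3 : y ^ (N + 1) * r = 0 := by
        rw [pow_succ', mul_assoc]; exact h1
      have h4 : r ∈ rAnn (y ^ (N + 1)) := h3
      rw [hN (N + 1) (by omega)] at h4
      exact h2 h4
  by_contra hx0
  obtain ⟨b, hb⟩ := exists_nonnil hP hG x hx0
  apply hb
  apply nilp
  have heq : {r : R | b * r ∈ rAnn x} = rAnn (x * b) := by
    ext r
    show x * (b * r) = 0 ↔ (x * b) * r = 0
    rw [mul_assoc]
  have hpre := ess_preimage hx b
  rwa [heq] at hpre

/-- Goldie: every essential right ideal of a prime right Goldie ring contains a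
regular element -/
lemma ess_exists_regular (hP : IsPrimeRing' R) (hG : IsRightGoldie R) {E : Set R}
    (hE : Ess E) : ∃ c ∈ E, IsRegular c := by
  obtain ⟨c, hcE, hc⟩ := ess_exists_rreg hP hG E hE
  refine ⟨c, hcE, ?_, ?_⟩
  · intro u v huv
    have h1 : c * (u - v) = 0 := by
      have : c * u = c * v := huv
      rw [mul_sub, this, sub_self]
    exact sub_eq_zero.mp (hc _ h1)
  · intro u v huv
    have hz : (u - v) * c = 0 := by
      have : u * c = v * c := huv
      rw [sub_mul, this, sub_self]
    have hann : {x : R | ∃ r, x = c * r} ⊆ rAnn (u - v) := by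
      rintro _ ⟨r, rfl⟩
      show (u - v) * (c * r) = 0
      rw [← mul_assoc, hz, zero_mul]
    have hrid : RId (rAnn (u - v)) := by
      refine ⟨?_, ?_, ?_⟩
      · show (u - v) * 0 = 0; rw [mul_zero]
      · intro p hp q hq
        show (u - v) * (p + q) = 0
        rw [mul_add]
        rw [show (u - v) * p = 0 from hp, show (u - v) * q = 0 from hq, add_zero]
      · intro p hp t
        show (u - v) * (p * t) = 0
        rw [← mul_assoc, show (u - v) * p = 0 from hp, zero_mul]
    have hEss := ess_mono (rreg_ess hG c hc) hann hrid
    exact sub_eq_zero.mp (ess_rAnn_eq_zero hP hG (u - v) hEss)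


open MulOpposite in
/-- the right quotient ring of a prime right Goldie ring is right artinian -/
lemma artinian_op {Q : Type*} [Ring Q] (hP : IsPrimeRing' R) (hG : IsRightGoldie R)
    (g : R →+* Q) (hQ : IsClassicalRightQuotientRing g) : IsArtinianRing Qᵐᵒᵖ := by
  classical
  show IsArtinian Qᵐᵒᵖ Qᵐᵒᵖ
  apply monotone_stabilizes_iff_artinian.mp
  intro F
  by_contra hstab
  push_neg at hstab
  set Jset : Submodule Qᵐᵒᵖ Qᵐᵒᵖ → Set R := fun I => {b : R | op (g b) ∈ I} with hJset
  have hJRId : ∀ I, RId (Jset I) := by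
    intro I
    refine ⟨?_, ?_, ?_⟩
    · show op (g 0) ∈ I
      rw [map_zero]
      exact I.zero_mem
    · intro x hx y hy
      show op (g (x + y)) ∈ I
      rw [map_add, op_add]
      exact I.add_mem hx hy
    · intro x hx r
      show op (g (x * r)) ∈ I
      rw [map_mul, op_mul]
      exact I.smul_mem (op (g r)) hx
  have hSAT : ∀ (I : Submodule Qᵐᵒᵖ Qᵐᵒᵖ) (b s : R), IsUnit (g s) →
      b * s ∈ Jset I → b ∈ Jset I := by
    intro I b s hu hbs
    obtain ⟨u, hu⟩ := hu
    have hgb : g b = g (b * s) * ↑u⁻¹ := by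
      rw [map_mul, ← hu, mul_assoc, Units.mul_inv, mul_one]
    show op (g b) ∈ I
    rw [hgb, op_mul]
    exact I.smul_mem _ hbs
  have hEXTN : ∀ I I' : Submodule Qᵐᵒᵖ Qᵐᵒᵖ, Jset I' ⊆ Jset I → I' ≤ I := by
    intro I I' hJ x hx
    obtain ⟨a, s, hs, hqs⟩ := hQ.2.2 (unop x)
    obtain ⟨u, hu⟩ := hQ.2.1 s hs
    have hga : op (g a) ∈ I' := by
      rw [← hqs, op_mul]
      have : op (unop x) ∈ I' := by rwa [op_unop]
      exact I'.smul_mem (op (g s)) this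
    have haI : op (g a) ∈ I := hJ hga
    have hq : unop x = g a * ↑u⁻¹ := by
      rw [← hqs, ← hu, mul_assoc, Units.mul_inv, mul_one]
    have : op (unop x) ∈ I := by
      rw [hq, op_mul]
      exact I.smul_mem _ haI
    rwa [op_unop] at this
  set G : ℕ → Submodule Qᵐᵒᵖ Qᵐᵒᵖ := fun n => OrderDual.ofDual (F n) with hGdef
  set nseq : ℕ → ℕ := fun k => Nat.rec 0 (fun _ nk => (hstab nk).choose) k with hnseq
  have hnstep : ∀ k, nseq (k + 1) = (hstab (nseq k)).choose := fun k => rfl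
  have hlt : ∀ k, G (nseq (k + 1)) < G (nseq k) := by
    intro k
    obtain ⟨hle, hne⟩ := (hstab (nseq k)).choose_spec
    rw [← hnstep k] at hle hne
    refine lt_of_le_of_ne ?_ ?_
    · exact F.monotone hle
    · intro heq
      exact hne (by rw [hGdef] at heq; exact (OrderDual.ofDual_inj.mp heq).symm ▸ rfl)
  set J : ℕ → Set R := fun k => Jset (G (nseq k)) with hJ
  have hGanti : ∀ k l, k ≤ l → G (nseq l) ≤ G (nseq k) := by
    intro k l hkl
    induction l with
    | zero =>
      have hk0 : k = 0 := by omega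
      subst hk0; exact le_rfl
    | succ l ih =>
      rcases Nat.lt_or_ge k (l + 1) with hcase | hcase
      · exact le_trans (le_of_lt (hlt l)) (ih (by omega))
      · have hkeq : k = l + 1 := by omega
        subst hkeq; exact le_rfl
  have hJmono : ∀ k l, k ≤ l → J l ⊆ J k := by
    intro k l hkl b hb
    exact hGanti k l hkl hb
  have hJstrictelem : ∀ k, ∃ b, b ∈ J k ∧ b ∉ J (k + 1) := by
    intro k
    by_contra hcontra
    push_neg at hcontra
    have hsub : J k ⊆ J (k + 1) := fun b hb => hcontra b hb
    have := hEXTN (G (nseq (k + 1))) (G (nseq k)) hsub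
    exact absurd (lt_of_lt_of_le (hlt k) this) (lt_irrefl _)
  have hzex : ∀ k, ∃ zk, zk ∈ J k ∧ zk ≠ 0 ∧ ∀ r, zk * r ∈ J (k + 1) → zk * r = 0 := by
    intro k
    by_contra hno
    push_neg at hno
    obtain ⟨b, hbk, hbk1⟩ := hJstrictelem k
    have hT : Ess {r : R | b * r ∈ J (k + 1)} := by
      constructor
      · refine ⟨?_, ?_, ?_⟩
        · show b * 0 ∈ J (k + 1); rw [mul_zero]; exact (hJRId _).1
        · intro x hx y hy; show b * (x + y) ∈ J (k + 1); rw [mul_add]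
          exact (hJRId _).2.1 _ hx _ hy
        · intro x hx r; show b * (x * r) ∈ J (k + 1); rw [← mul_assoc]
          exact (hJRId _).2.2 _ hx r
      · intro a ha
        by_cases hba : b * a = 0
        · refine ⟨1, ?_, by rwa [mul_one]⟩
          show b * (a * 1) ∈ J (k + 1)
          rw [mul_one, hba]
          exact (hJRId _).1
        · have hbaJ : b * a ∈ J k := (hJRId _).2.2 b hbk a
          obtain ⟨r, h1, h2⟩ := hno (b * a) hbaJ hba
          refine ⟨r, ?_, ?_⟩
          · show b * (a * r) ∈ J (k + 1); rw [← mul_assoc]; exact h1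
          · intro h0; apply h2; rw [mul_assoc, h0, mul_zero]
    obtain ⟨sreg, hsregT, hsregreg⟩ := ess_exists_regular hP hG hT
    exact hbk1 (hSAT _ b sreg (hQ.2.1 sreg hsregreg) hsregT)
  choose z hz1 hz2 hz3 using hzex
  apply hG.2
  refine ⟨fun k => Submodule.span Rᵐᵒᵖ {z k}, fun k => ?_, ?_⟩
  · intro hbot
    have hmem : z k ∈ (⊥ : Submodule Rᵐᵒᵖ R) :=
      hbot ▸ Submodule.mem_span_singleton_self _
    exact hz2 k (by simpa using hmem)
  · exact indep_of_terms z (fun s r hs i hi =>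
      gen3 J hJmono (fun n => hJRId _) z hz1 hz3 s r hs i hi)

end GoldieAux

open GoldieAux MulOpposite in
/-- Lemma 6.2 of Goodearl–Launois–Lenagan (key step): let `B ⊆ A` be `k`-algebras which
are prime right Goldie rings, such that every regular element of `B` is regular in `A`,
and `A` is finitely generated as a right `B`-module. Then the right Goldie quotient ring
`Fract(A)` is finitely generated as a right module over `Fract(B)` (embedded in
`Fract(A)` via the natural map `h`). -/
theorem fract_fg_of_fg
    (k : Type*) [Field k]
    {A : Type*} [Ring A] [Algebra k A] (B : Subalgebra k A)
    (hA : IsPrimeRing' A) (hB : IsPrimeRing' B)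
    (hAG : IsRightGoldie A) (hBG : IsRightGoldie B)
    -- every regular element of `B` is regular in `A`
    (hreg : ∀ b : B, IsRegular b → IsRegular (b : A))
    -- `A` is a finitely generated right `B`-module
    (hfg : ∃ t : Finset A, ∀ a : A, ∃ c : A → B, a = ∑ x ∈ t, x * (c x : A))
    -- the Goldie quotient rings of `A` and of `B`
    {QA : Type*} [Ring QA] [Algebra k QA] (f : A →ₐ[k] QA)
    (hQA : IsClassicalRightQuotientRing (f : A →+* QA))
    {QB : Type*} [Ring QB] [Algebra k QB] (g : B →ₐ[k] QB)
    (hQB : IsClassicalRightQuotientRing (g : B →+* QB))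
    -- the induced embedding `Fract(B) → Fract(A)`
    (h : QB →ₐ[k] QA) (hcomp : ∀ b : B, h (g b) = f (b : A)) :
    ∃ t : Finset QA, ∀ x : QA, ∃ c : QA → QB, x = ∑ y ∈ t, y * h (c y) := by
  classical
  obtain ⟨t, ht⟩ := hfg
  letI : Module QBᵐᵒᵖ QA := Module.compHom QA (RingHom.op (h : QB →+* QA))
  have hsmul : ∀ (q : QB) (x : QA), (op q) • x = x * h q := fun q x => rfl
  set D : Submodule QBᵐᵒᵖ QA :=
    Submodule.span QBᵐᵒᵖ (↑(t.image (fun x => f x))) with hD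
  have hgen : ∀ x ∈ t, f x ∈ D := fun x hx => Submodule.subset_span (by
    simp only [Finset.coe_image, Set.mem_image]
    exact ⟨x, hx, rfl⟩)
  have hfa : ∀ a : A, f a ∈ D := by
    intro a
    obtain ⟨c, hc⟩ := ht a
    rw [hc, map_sum]
    refine Submodule.sum_mem D ?_
    intro x hx
    rw [map_mul]
    have hcx : f ((c x : A)) = h (g (c x)) := (hcomp (c x)).symm
    rw [hcx, ← hsmul]
    exact D.smul_mem _ (hgen x hx)
  have hmulA : ∀ (a : A), ∀ x ∈ D, f a * x ∈ D := by
    intro a x hx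
    induction hx using Submodule.span_induction with
    | mem y hy =>
      have : ∃ x' ∈ t, f x' = y := by
        simpa only [Finset.coe_image, Set.mem_image, Finset.mem_coe] using hy
      obtain ⟨x', _, rfl⟩ := this
      rw [← map_mul]
      exact hfa (a * x')
    | zero => rw [mul_zero]; exact D.zero_mem
    | add y z hy hz ihy ihz => rw [mul_add]; exact D.add_mem ihy ihz
    | smul q y hy ihy =>
      have hqy : f a * (q • y) = q • (f a * y) := by
        rw [show q • y = y * h q.unop from rfl,
          show q • (f a * y) = (f a * y) * h q.unop from rfl, mul_assoc]
      rw [hqy]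
      exact D.smul_mem q ihy
  have hDfg : D.FG := ⟨t.image (fun x => f x), rfl⟩
  haveI hart : IsArtinianRing QBᵐᵒᵖ := artinian_op hB hBG (g : B →+* QB) hQB
  haveI := isArtinian_of_fg_of_artinian D hDfg
  have hkey : ∀ s : A, IsRegular s → ∀ x ∈ D, ∃ y ∈ D, f s * y = x := by
    intro s hs
    have hu : IsUnit (f s) := hQA.2.1 s hs
    set φ : D →ₗ[QBᵐᵒᵖ] D :=
      { toFun := fun d => ⟨f s * d.1, hmulA s d.1 d.2⟩
        map_add' := by
          intro d e
          apply Subtype.ext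
          show f s * (d.1 + e.1) = f s * d.1 + f s * e.1
          rw [mul_add]
        map_smul' := by
          intro q d
          apply Subtype.ext
          show f s * (q • d.1) = q • (f s * d.1)
          rw [show q • d.1 = d.1 * h q.unop from rfl,
            show q • (f s * d.1) = (f s * d.1) * h q.unop from rfl, mul_assoc] } with hφ
    have hinj : Function.Injective φ := by
      intro d e hde
      apply Subtype.ext
      have hde1 : f s * d.1 = f s * e.1 := congrArg Subtype.val hde
      exact hu.mul_left_cancel hde1
    have hsurj := IsArtinian.surjective_of_injective_endomorphism φ hinj
    intro x hx
    obtain ⟨y, hy⟩ := hsurj ⟨x, hx⟩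
    exact ⟨y.1, y.2, congrArg Subtype.val hy⟩
  have htop : ∀ q : QA, q ∈ D := by
    have h1D : (1 : QA) ∈ D := by
      have hone := hfa 1
      rwa [map_one] at hone
    intro q
    obtain ⟨a, s, hs, hq⟩ := hQA.2.2 q
    obtain ⟨u, hu⟩ := hQA.2.1 s hs
    obtain ⟨y, hyD, hy⟩ := hkey s hs 1 h1D
    have hq' : q = f a * y := by
      have hyu : y = ↑u⁻¹ := by
        calc y = ↑u⁻¹ * (↑u * y) := by rw [← mul_assoc, Units.inv_mul, one_mul]
        _ = ↑u⁻¹ := by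
            show (↑u⁻¹ : QA) * (↑u * y) = ↑u⁻¹
            rw [hu]
            show (↑u⁻¹ : QA) * (f s * y) = ↑u⁻¹
            rw [hy, mul_one]
      calc q = q * (↑u * ↑u⁻¹) := by rw [Units.mul_inv, mul_one]
      _ = (q * ↑u) * ↑u⁻¹ := by rw [mul_assoc]
      _ = f a * y := by
          rw [hu]
          have hq2 : q * f s = f a := hq
          show q * f s * ↑u⁻¹ = f a * y
          rw [hq2, hyu]
    rw [hq']
    exact hmulA a y hyD
  refine ⟨t.image (fun x => f x), ?_⟩
  intro x
  have hx := htop x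
  rw [hD] at hx
  obtain ⟨μ, -, hμ⟩ := Submodule.mem_span_finset.mp hx
  refine ⟨fun y => (μ y).unop, ?_⟩
  rw [← hμ]
  exact Finset.sum_congr rfl fun y _ => rfl
end

section
/- Let T be a quantum torus over k with exponent group ℤⁿ, Z ⊆ ℤⁿ the central exponent subgroup, and W ⊆ ℤⁿ a subgroup maximal with respect to W ∩ Z = 0. Let C = ⊕_{a ∈ W} k yᵃ, a sub-quantum-torus of T. Then the center of C equals k (i.e., C is central over k). -/
/-- auxiliary: the commutator pairing of the twisting cocycle. -/
private def qtLam {k : Type*} [Field k] {G : Type*} (μ : G → G → kˣ) (a b : G) : kˣ :=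
  μ a b * (μ b a)⁻¹

private lemma qtLam_add {k : Type*} [Field k] {G : Type*} [AddCommGroup G]
    (μ : G → G → kˣ)
    (coc : ∀ a b c : G, (μ b c : k) * (μ a (b + c) : k) = (μ a b : k) * (μ (a + b) c : k))
    (a b c : G) :
    qtLam μ a (b + c) = qtLam μ a b * qtLam μ a c := by
  have h1 := coc a b c
  have h2 := coc b c a
  have h3 := coc b a c
  rw [add_comm c a] at h2
  rw [add_comm b a] at h3
  have key : (μ a (b + c) : k) * (μ b a : k) * (μ c a : k)
      = (μ (b + c) a : k) * (μ a b : k) * (μ a c : k) := by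
    apply mul_left_cancel₀ (μ b c).ne_zero
    linear_combination ((μ b a : k) * (μ c a : k)) * h1 +
      ((μ a b : k) * (μ a c : k)) * h2 - ((μ a b : k) * (μ c a : k)) * h3
  ext
  simp only [qtLam, Units.val_mul, Units.val_inv_eq_inv_val]
  field_simp
  linear_combination key

private lemma qtLam_zsmul {k : Type*} [Field k] {G : Type*} [AddCommGroup G]
    (μ : G → G → kˣ)
    (coc : ∀ a b c : G, (μ b c : k) * (μ a (b + c) : k) = (μ a b : k) * (μ (a + b) c : k))
    (a : G) (m : ℤ) (b : G) :
    qtLam μ a (m • b) = qtLam μ a b ^ m := by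
  let f : G →+ Additive kˣ :=
    AddMonoidHom.mk' (fun c => Additive.ofMul (qtLam μ a c))
      (fun b c => by simp [qtLam_add μ coc a b c])
  have h := map_zsmul f m b
  simpa [f, ← ofMul_zpow] using h


/-- Part of the proof of Proposition 6.3 of Goodearl–Launois–Lenagan. Let
`T = O_q((k*)ⁿ)` be a quantum torus over a field `k` (with basis the monomials `yᵃ`,
`a ∈ ℤⁿ`, `y⁰ = 1` and `yᵃyᵇ = μ(a,b) y^{a+b}` with `μ(a,b) ∈ k*`). Let `Z ⊆ ℤⁿ` be the
subgroup of central exponents, and let `W ⊆ ℤⁿ` be a subgroup maximal with respect to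
`W ∩ Z = 0`. Let `C = ⊕_{a ∈ W} k yᵃ`, the sub-quantum-torus of `T` spanned by the
monomials with exponents in `W`. Then the center of `C` is exactly `k`. -/
theorem sub_quantum_torus_center_trivial
    (k : Type*) [Field k] (n : ℕ)
    (T : Type*) [Ring T] [Algebra k T]
    (y : (Fin n → ℤ) → T)
    (hindep : LinearIndependent k y)
    (hspan : Submodule.span k (Set.range y) = ⊤)
    (hone : y 0 = 1)
    (μ : (Fin n → ℤ) → (Fin n → ℤ) → kˣ)
    (hmul : ∀ a b, y a * y b = (μ a b : k) • y (a + b))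
    -- the subgroup of central exponents
    (Z : AddSubgroup (Fin n → ℤ))
    (hZ : ∀ a, a ∈ Z ↔ y a ∈ Subalgebra.center k T)
    -- `W` is maximal with respect to `W ∩ Z = 0`
    (W : AddSubgroup (Fin n → ℤ))
    (hWZ : W ⊓ Z = ⊥)
    (hWmax : ∀ W' : AddSubgroup (Fin n → ℤ), W ≤ W' → W' ⊓ Z = ⊥ → W' = W)
    -- the sub-quantum-torus `C` spanned by the monomials with exponents in `W`
    (C : Subalgebra k T)
    (hC : (C : Set T) = ↑(Submodule.span k (y '' (W : Set (Fin n → ℤ))))) :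
    ∀ x ∈ C, (∀ c ∈ C, x * c = c * x) → ∃ r : k, x = algebraMap k T r := by
  have hyne : ∀ a, y a ≠ 0 := fun a => hindep.ne_zero a
  have hscal : ∀ (a : Fin n → ℤ) (c d : k), c • y a = d • y a → c = d := by
    intro a c d h
    by_contra hne
    have h0 : (c - d) • y a = 0 := by rw [sub_smul, h, sub_self]
    rcases smul_eq_zero.1 h0 with h1 | h1
    · exact hne (sub_eq_zero.1 h1)
    · exact hyne a h1
  -- commutation of monomials
  have hcommiff : ∀ a b, y a * y b = y b * y a ↔ (μ a b : k) = (μ b a : k) := by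
    intro a b
    rw [hmul a b, hmul b a, add_comm b a]
    exact ⟨hscal _ _ _, fun h => by rw [h]⟩
  -- the cocycle identity
  have coc : ∀ a b c, (μ b c : k) * (μ a (b + c) : k) = (μ a b : k) * (μ (a + b) c : k) := by
    intro a b c
    apply hscal (a + b + c)
    have h1 : y a * (y b * y c) = ((μ b c : k) * (μ a (b + c) : k)) • y (a + b + c) := by
      rw [hmul b c, mul_smul_comm, hmul a (b + c), smul_smul, add_assoc]
    have h2 : y a * y b * y c = ((μ a b : k) * (μ (a + b) c : k)) • y (a + b + c) := by
      rw [hmul a b, smul_mul_assoc, hmul (a + b) c, smul_smul]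
    rw [← h1, ← h2, mul_assoc]
  have hlam_iff : ∀ a b, qtLam μ a b = 1 ↔ (μ a b : k) = (μ b a : k) := by
    intro a b
    rw [qtLam, mul_inv_eq_one, Units.ext_iff]
  -- lam symmetry
  have hlam_symm : ∀ a b, qtLam μ a b = (qtLam μ b a)⁻¹ := by
    intro a b
    rw [qtLam, qtLam, mul_inv_rev, inv_inv, mul_comm]
  have hlam_zsmul_left : ∀ (a : Fin n → ℤ) (m : ℤ) (b : Fin n → ℤ),
      qtLam μ (m • a) b = qtLam μ a b ^ m := by
    intro a m b
    rw [hlam_symm, qtLam_zsmul μ coc b m a, hlam_symm a b, ← inv_zpow]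
  -- torsion of ℤⁿ/(Z ⊔ W)
  have htor : ∀ b : Fin n → ℤ, ∃ m : ℕ, 0 < m ∧ (m : ℤ) • b ∈ Z ⊔ W := by
    intro b
    by_contra hcon
    push_neg at hcon
    have hbW : b ∉ W := by
      intro hb
      exact hcon 1 one_pos (by simpa using AddSubgroup.mem_sup_right hb)
    have hW' : (W ⊔ AddSubgroup.zmultiples b) ⊓ Z = ⊥ := by
      rw [eq_bot_iff]
      rintro x ⟨hx1, hx2⟩
      rcases AddSubgroup.mem_sup.1 hx1 with ⟨w, hw, c, hc, rfl⟩
      rcases AddSubgroup.mem_zmultiples_iff.1 hc with ⟨j, rfl⟩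
      rcases eq_or_ne j 0 with rfl | hj
      · rw [zero_smul, add_zero] at hx2 ⊢
        have hmem : w ∈ W ⊓ Z := ⟨hw, hx2⟩
        rw [hWZ] at hmem
        exact hmem
      · exfalso
        have hjb : j • b ∈ Z ⊔ W := by
          have he : j • b = (w + j • b) + (-w) := by abel
          rw [he]
          exact AddSubgroup.add_mem _ (AddSubgroup.mem_sup_left hx2)
            (AddSubgroup.mem_sup_right (neg_mem hw))
        apply hcon j.natAbs (Int.natAbs_pos.2 hj)
        rcases Int.natAbs_eq j with he | he
        · rw [← he]; exact hjb
        · have hj' : (j.natAbs : ℤ) = -j := by omega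
          rw [hj', neg_smul]
          exact neg_mem hjb
    have hW'eq := hWmax _ le_sup_left hW'
    exact hbW (hW'eq ▸ AddSubgroup.mem_sup_right (AddSubgroup.mem_zmultiples b))
  choose m hmpos hmmem using htor
  -- a uniform exponent s
  set e : Fin n → (Fin n → ℤ) := fun i => Pi.single i 1 with he
  set s : ℕ := ∏ i : Fin n, m (e i) with hs
  have hspos : 0 < s := Finset.prod_pos fun i _ => hmpos _
  have hse : ∀ i, (s : ℤ) • e i ∈ Z ⊔ W := by
    intro i
    obtain ⟨t, ht⟩ := Finset.dvd_prod_of_mem (fun i => m (e i)) (Finset.mem_univ i)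
    rw [hs, ht]
    push_cast
    rw [mul_comm, mul_smul]
    exact AddSubgroup.zsmul_mem _ (hmmem (e i)) t
  have hsb : ∀ b : Fin n → ℤ, (s : ℤ) • b ∈ Z ⊔ W := by
    intro b
    have hb : b = ∑ i, b i • e i := by
      funext j
      simp [he, Pi.single_apply, Finset.sum_apply, eq_comm]
    rw [hb, Finset.smul_sum]
    apply AddSubgroup.sum_mem
    intro i _
    rw [smul_comm]
    exact AddSubgroup.zsmul_mem _ (hse i) (b i)
  -- centrality criterion
  have hcentral : ∀ c : Fin n → ℤ, (∀ b, (μ c b : k) = (μ b c : k)) → c ∈ Z := by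
    intro c hc
    rw [hZ, Subalgebra.mem_center_iff]
    intro t
    have ht : t ∈ Submodule.span k (Set.range y) := by rw [hspan]; trivial
    induction ht using Submodule.span_induction with
    | mem u hu =>
      obtain ⟨b, rfl⟩ := hu
      exact ((hcommiff c b).2 (hc b)).symm
    | zero => rw [zero_mul, mul_zero]
    | add u v _ _ hu hv => rw [add_mul, mul_add, hu, hv]
    | smul r u _ hu => rw [smul_mul_assoc, mul_smul_comm, hu]
  -- commutation with central monomials
  have hZcomm : ∀ z ∈ Z, ∀ a, (μ a z : k) = (μ z a : k) := by
    intro z hz a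
    have := ((hZ z).1 hz)
    rw [Subalgebra.mem_center_iff] at this
    exact (hcommiff a z).1 (this (y a))
  -- now take x in the center of C
  intro x hxC hxcomm
  have hx' : x ∈ Submodule.span k (y '' (W : Set (Fin n → ℤ))) := by
    have : x ∈ (C : Set T) := hxC
    rwa [hC] at this
  obtain ⟨l, hl, rfl⟩ := (Finsupp.mem_span_image_iff_linearCombination k).1 hx'
  have hlW : ∀ a ∈ l.support, a ∈ W := fun a ha => Finsupp.mem_supported k l |>.1 hl ha
  -- coefficients commute
  have hkey : ∀ a ∈ l.support, ∀ b ∈ W, (μ a b : k) = (μ b a : k) := by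
    intro a ha b hb
    have hybC : y b ∈ C := by
      rw [← SetLike.mem_coe, hC]
      exact Submodule.subset_span ⟨b, hb, rfl⟩
    have hcomm := hxcomm (y b) hybC
    rw [Finsupp.linearCombination_apply, Finsupp.sum] at hcomm
    have h1 : (∑ a ∈ l.support, l a • y a) * y b
        = ∑ a ∈ l.support, (l a * (μ a b : k)) • y (a + b) := by
      rw [Finset.sum_mul]
      refine Finset.sum_congr rfl fun a _ => ?_
      rw [smul_mul_assoc, hmul a b, smul_smul]
    have h2 : y b * (∑ a ∈ l.support, l a • y a)
        = ∑ a ∈ l.support, (l a * (μ b a : k)) • y (a + b) := by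
      rw [Finset.mul_sum]
      refine Finset.sum_congr rfl fun a _ => ?_
      rw [mul_smul_comm, hmul b a, smul_smul, add_comm b a]
    have h3 : (∑ a ∈ l.support, (l a * ((μ a b : k) - (μ b a : k))) • y (a + b)) = 0 := by
      have := sub_eq_zero.2 hcomm
      rw [h1, h2, ← Finset.sum_sub_distrib] at this
      · rw [← this]
        refine Finset.sum_congr rfl fun a _ => ?_
        rw [← sub_smul, mul_sub]
    have hind' : LinearIndependent k fun a : Fin n → ℤ => y (a + b) :=
      hindep.comp (· + b) (add_left_injective b)
    have h4 := linearIndependent_iff'.1 hind' l.support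
      (fun a => l a * ((μ a b : k) - (μ b a : k))) h3 a ha
    have hla : l a ≠ 0 := Finsupp.mem_support_iff.1 ha
    have := (mul_eq_zero.1 h4).resolve_left hla
    exact sub_eq_zero.1 this
  -- each exponent in the support must be zero
  have hzero : ∀ a ∈ l.support, a = 0 := by
    intro a ha
    have haW : a ∈ W := hlW a ha
    have hsaZ : (s : ℤ) • a ∈ Z := by
      apply hcentral
      intro b
      rw [← hlam_iff]
      rw [hlam_zsmul_left a (s : ℤ) b, ← qtLam_zsmul μ coc a (s : ℤ) b]
      obtain ⟨z, hz, w, hw, hzw⟩ := AddSubgroup.mem_sup.1 (hsb b)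
      rw [← hzw, qtLam_add μ coc a z w]
      rw [(hlam_iff a z).2 (hZcomm z hz a), (hlam_iff a w).2 (hkey a ha w hw), one_mul]
    have hsaW : (s : ℤ) • a ∈ W := AddSubgroup.zsmul_mem _ haW _
    have hmem : (s : ℤ) • a ∈ W ⊓ Z := ⟨hsaW, hsaZ⟩
    rw [hWZ, AddSubgroup.mem_bot] at hmem
    rcases smul_eq_zero.1 hmem with h | h
    · exact absurd h (by exact_mod_cast hspos.ne')
    · exact h
  -- conclude
  refine ⟨l 0, ?_⟩
  rw [Finsupp.linearCombination_apply, Finsupp.sum, Algebra.algebraMap_eq_smul_one, ← hone]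
  have hsub : l.support ⊆ {0} := fun a ha => Finset.mem_singleton.2 (hzero a ha)
  rw [Finset.sum_subset hsub]
  · rw [Finset.sum_singleton]
  · intro a _ ha
    rw [Finsupp.notMem_support_iff.1 ha, zero_smul]
end

section
/- Let T be a quantum torus over a field k. Then extension and contraction give mutually inverse, inclusion-preserving bijections between the set of ideals of the center Z(T) and the set of two-sided ideals of T: I ↦ IT and J ↦ J ∩ Z(T). In particular, if m is a maximal ideal of Z(T) then mT is a maximal two-sided ideal of T. -/
open scoped Classical

section QT

variable {k : Type*} [Field k] {n : ℕ} {T : Type*} [Ring T] [Algebra k T]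
variable {y : (Fin n → ℤ) → T} {μ : (Fin n → ℤ) → (Fin n → ℤ) → kˣ}

/-- cancel scalars on a nonzero vector -/
lemma qt_smul_cancel (hindep : LinearIndependent k y) {c d : k} {a : Fin n → ℤ}
    (h : c • y a = d • y a) : c = d := by
  have h0 : (c - d) • y a = 0 := by rw [sub_smul, h, sub_self]
  rcases smul_eq_zero.mp h0 with h1 | h1
  · exact sub_eq_zero.mp h1
  · exact absurd h1 (hindep.ne_zero a)

lemma qt_cocycle (hindep : LinearIndependent k y)
    (hmul : ∀ a b, y a * y b = (μ a b : k) • y (a + b)) (a b c : Fin n → ℤ) :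
    (μ a b : k) * μ (a + b) c = (μ b c : k) * μ a (b + c) := by
  have h1 : (y a * y b) * y c = y a * (y b * y c) := mul_assoc _ _ _
  rw [hmul a b, smul_mul_assoc, hmul (a+b) c, hmul b c, mul_smul_comm, hmul a (b+c),
    smul_smul, smul_smul, add_assoc] at h1
  exact qt_smul_cancel hindep h1

lemma qt_mu_zero_left (hindep : LinearIndependent k y) (hone : y 0 = 1)
    (hmul : ∀ a b, y a * y b = (μ a b : k) • y (a + b)) (b : Fin n → ℤ) :
    (μ 0 b : k) = 1 := by
  have h := hmul 0 b
  rw [hone, one_mul, zero_add] at h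
  exact qt_smul_cancel hindep (show (μ 0 b : k) • y b = (1:k) • y b by rw [one_smul]; exact h.symm)

lemma qt_mu_zero_right (hindep : LinearIndependent k y) (hone : y 0 = 1)
    (hmul : ∀ a b, y a * y b = (μ a b : k) • y (a + b)) (a : Fin n → ℤ) :
    (μ a 0 : k) = 1 := by
  have h := hmul a 0
  rw [hone, mul_one, add_zero] at h
  exact qt_smul_cancel hindep (show (μ a 0 : k) • y a = (1:k) • y a by rw [one_smul]; exact h.symm)


/-- the character `a ↦ μ(c,a)/μ(a,c)` -/
noncomputable def qtChi (μ : (Fin n → ℤ) → (Fin n → ℤ) → kˣ) (c a : Fin n → ℤ) : k :=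
  (μ c a : k) * (μ a c : k)⁻¹

lemma qtChi_ne_zero (μ : (Fin n → ℤ) → (Fin n → ℤ) → kˣ) (c a : Fin n → ℤ) :
    qtChi μ c a ≠ 0 :=
  mul_ne_zero (Units.ne_zero _) (inv_ne_zero (Units.ne_zero _))

lemma qtChi_zero (hindep : LinearIndependent k y) (hone : y 0 = 1)
    (hmul : ∀ a b, y a * y b = (μ a b : k) • y (a + b)) (c : Fin n → ℤ) :
    qtChi μ c 0 = 1 := by
  rw [qtChi, qt_mu_zero_right hindep hone hmul, qt_mu_zero_left hindep hone hmul, inv_one, mul_one]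

lemma qtChi_add (hindep : LinearIndependent k y)
    (hmul : ∀ a b, y a * y b = (μ a b : k) • y (a + b)) (c a b : Fin n → ℤ) :
    qtChi μ c (a + b) = qtChi μ c a * qtChi μ c b := by
  have e1 := qt_cocycle hindep hmul a b c
  have e2 := qt_cocycle hindep hmul c a b
  have e3 := qt_cocycle hindep hmul a c b
  rw [show c + a = a + c from add_comm c a] at e2
  rw [show c + b = b + c from add_comm c b] at e3
  have key : (μ c (a+b) : k) * μ a c * μ b c = (μ (a+b) c : k) * μ c a * μ c b := by
    have hab : (μ a b : k) ≠ 0 := Units.ne_zero _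
    apply mul_left_cancel₀ hab
    linear_combination (-((μ a c : k) * (μ b c : k))) * e2 + ((μ c a : k) * (μ b c : k)) * e3 -
      ((μ c a : k) * (μ c b : k)) * e1
  rw [qtChi, qtChi, qtChi]
  field_simp
  linear_combination key


lemma qt_comm (hmul : ∀ a b, y a * y b = (μ a b : k) • y (a + b)) (c a : Fin n → ℤ) :
    y c * y a = qtChi μ c a • (y a * y c) := by
  rw [hmul c a, hmul a c, qtChi, smul_smul, show a + c = c + a from add_comm a c,
    mul_assoc, inv_mul_cancel₀ (Units.ne_zero (μ a c)), mul_one]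

/-- inverse of the monomial `y a` -/
noncomputable def qtInv (y : (Fin n → ℤ) → T) (μ : (Fin n → ℤ) → (Fin n → ℤ) → kˣ)
    (a : Fin n → ℤ) : T := ((μ a (-a) : k))⁻¹ • y (-a)

lemma qt_mul_inv (hone : y 0 = 1)
    (hmul : ∀ a b, y a * y b = (μ a b : k) • y (a + b)) (a : Fin n → ℤ) :
    y a * qtInv y μ a = 1 := by
  rw [qtInv, mul_smul_comm, hmul a (-a), smul_smul,
    inv_mul_cancel₀ (Units.ne_zero (μ a (-a))), add_neg_cancel, one_smul, hone]

lemma qt_inv_mul (hindep : LinearIndependent k y) (hone : y 0 = 1)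
    (hmul : ∀ a b, y a * y b = (μ a b : k) • y (a + b)) (a : Fin n → ℤ) :
    qtInv y μ a * y a = 1 := by
  have hsym : (μ (-a) a : k) = μ a (-a) := by
    have := qt_cocycle hindep hmul a (-a) a
    rw [add_neg_cancel, neg_add_cancel, qt_mu_zero_left hindep hone hmul,
      qt_mu_zero_right hindep hone hmul, mul_one, mul_one] at this
    exact this.symm
  rw [qtInv, smul_mul_assoc, hmul (-a) a, smul_smul, hsym,
    inv_mul_cancel₀ (Units.ne_zero (μ a (-a))), neg_add_cancel, one_smul, hone]

lemma qt_conj (hindep : LinearIndependent k y) (hone : y 0 = 1)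
    (hmul : ∀ a b, y a * y b = (μ a b : k) • y (a + b)) (c a : Fin n → ℤ) :
    y c * y a * qtInv y μ c = qtChi μ c a • y a := by
  rw [qt_comm hmul c a, smul_mul_assoc, mul_assoc, qt_mul_inv hone hmul, mul_one]


lemma qt_y_central (hspan : Submodule.span k (Set.range y) = ⊤)
    (hmul : ∀ a b, y a * y b = (μ a b : k) • y (a + b))
    {b : Fin n → ℤ} (hb : ∀ c, qtChi μ c b = 1) : y b ∈ Subalgebra.center k T := by
  rw [Subalgebra.mem_center_iff]
  intro g
  have hg : g ∈ (⊤ : Submodule k T) := trivial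
  rw [← hspan] at hg
  induction hg using Submodule.span_induction with
  | mem x hx =>
    obtain ⟨c, rfl⟩ := hx
    rw [qt_comm hmul c b, hb c, one_smul]
  | zero => rw [zero_mul, mul_zero]
  | add x z _ _ hx hz => rw [add_mul, mul_add, hx, hz]
  | smul r x _ hx => rw [smul_mul_assoc, mul_smul_comm, hx]

/-- the basis given by the monomials -/
noncomputable def qtBasis (hindep : LinearIndependent k y)
    (hspan : Submodule.span k (Set.range y) = ⊤) : Module.Basis (Fin n → ℤ) k T :=
  Module.Basis.mk hindep hspan.ge

lemma qt_repr_sum (hindep : LinearIndependent k y)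
    (hspan : Submodule.span k (Set.range y) = ⊤) (x : T) :
    ∑ a ∈ ((qtBasis hindep hspan).repr x).support,
      ((qtBasis hindep hspan).repr x) a • y a = x := by
  classical
  have h := (qtBasis hindep hspan).linearCombination_repr x
  rw [Finsupp.linearCombination_apply, Finsupp.sum] at h
  calc ∑ a ∈ ((qtBasis hindep hspan).repr x).support,
        ((qtBasis hindep hspan).repr x) a • y a
      = ∑ a ∈ ((qtBasis hindep hspan).repr x).support,
        ((qtBasis hindep hspan).repr x) a • (qtBasis hindep hspan) a := by
        refine Finset.sum_congr rfl fun a _ => ?_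
        rw [qtBasis, Module.Basis.mk_apply]
    _ = x := h

lemma qt_central_supp (hindep : LinearIndependent k y)
    (hspan : Submodule.span k (Set.range y) = ⊤)
    (hmul : ∀ a b, y a * y b = (μ a b : k) • y (a + b))
    {z : T} (hz : z ∈ Subalgebra.center k T) :
    ∀ a ∈ ((qtBasis hindep hspan).repr z).support, ∀ c, qtChi μ c a = 1 := by
  classical
  intro a ha c
  set f := (qtBasis hindep hspan).repr z with hf
  have hcom : z * y c = y c * z := (Subalgebra.mem_center_iff.mp hz (y c)).symm
  have hsum := qt_repr_sum hindep hspan z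
  rw [← hsum] at hcom
  rw [Finset.sum_mul, Finset.mul_sum] at hcom
  have hL : ∀ b ∈ f.support, f b • y b * y c = (f b * μ b c) • (y ∘ (· + c)) b := by
    intro b _; rw [smul_mul_assoc, hmul b c, smul_smul]; rfl
  have hR : ∀ b ∈ f.support, y c * f b • y b = (f b * μ c b) • (y ∘ (· + c)) b := by
    intro b _
    rw [mul_smul_comm, hmul c b, smul_smul, mul_comm (f b) ((μ c b : k)),
      mul_comm ((μ c b : k)) (f b), show c + b = b + c from add_comm c b]
    rfl
  rw [Finset.sum_congr rfl hL, Finset.sum_congr rfl hR] at hcom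
  have hinj : Function.Injective (· + c : (Fin n → ℤ) → (Fin n → ℤ)) :=
    fun u v huv => by simpa using congrArg (· + (-c)) huv
  have hli : LinearIndependent k (y ∘ (· + c)) := hindep.comp _ hinj
  have h0 : ∑ b ∈ f.support, (f b * μ b c - f b * μ c b) • (y ∘ (· + c)) b = 0 := by
    simp only [sub_smul]
    rw [Finset.sum_sub_distrib, hcom, sub_self]
  have := linearIndependent_iff'.mp hli f.support _ h0 a ha
  have hfa : f a ≠ 0 := Finsupp.mem_support_iff.mp ha
  have hmu : (μ a c : k) = μ c a := by
    exact mul_left_cancel₀ hfa (sub_eq_zero.mp this)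
  rw [qtChi, ← hmu, mul_inv_cancel₀ (Units.ne_zero _)]


lemma qt_smul_mem (J : TwoSidedIdeal T) (r : k) {x : T} (hx : x ∈ J) : r • x ∈ J := by
  rw [Algebra.smul_def]; exact J.mul_mem_left _ _ hx

lemma qt_comp_mem (hindep : LinearIndependent k y) (hone : y 0 = 1)
    (hmul : ∀ a b, y a * y b = (μ a b : k) • y (a + b)) (J : TwoSidedIdeal T) :
    ∀ (N : ℕ) (s : Finset (Fin n → ℤ)) (f : (Fin n → ℤ) → k),
      (s.image (fun a c => qtChi μ c a)).card ≤ N →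
      (∑ a ∈ s, f a • y a) ∈ J →
      ∀ v : (Fin n → ℤ) → k,
        (∑ a ∈ s.filter (fun a => (fun c => qtChi μ c a) = v), f a • y a) ∈ J := by
  classical
  set Φ : (Fin n → ℤ) → (Fin n → ℤ) → k := fun a c => qtChi μ c a with hΦ
  intro N
  induction N with
  | zero =>
    intro s f hcard hx v
    by_cases hc : ∀ a ∈ s, Φ a = v
    · rwa [Finset.filter_true_of_mem hc]
    · push_neg at hc
      obtain ⟨a1, ha1, -⟩ := hc
      have : 0 < (s.image Φ).card :=
        Finset.card_pos.mpr ⟨Φ a1, Finset.mem_image_of_mem Φ ha1⟩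
      omega
  | succ N ih =>
    intro s f hcard hx v
    by_cases hc : ∀ a ∈ s, Φ a = v
    · rwa [Finset.filter_true_of_mem hc]
    · push_neg at hc
      obtain ⟨a1, ha1, hne⟩ := hc
      set w : (Fin n → ℤ) → k := Φ a1 with hw
      obtain ⟨c, hcne⟩ := Function.ne_iff.mp hne
      -- hcne : Φ a1 c ≠ v c, i.e. w c ≠ v c
      set s' : Finset (Fin n → ℤ) := s.filter (fun a => Φ a c ≠ w c) with hs'
      set g : (Fin n → ℤ) → k := fun a => (Φ a c - w c) * f a with hg
      set X : T := ∑ a ∈ s, f a • y a with hX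
      -- Step 1 : the twisted element is in J
      have hX' : (∑ a ∈ s', g a • y a) ∈ J := by
        have heq : (∑ a ∈ s', g a • y a) = y c * X * qtInv y μ c - w c • X := by
          have h1 : y c * X * qtInv y μ c = ∑ a ∈ s, (f a * Φ a c) • y a := by
            rw [hX, Finset.mul_sum, Finset.sum_mul]
            refine Finset.sum_congr rfl fun a _ => ?_
            rw [mul_smul_comm, smul_mul_assoc, qt_conj hindep hone hmul c a,
              smul_smul, mul_comm (f a) (Φ a c)]
          have h2 : w c • X = ∑ a ∈ s, (w c * f a) • y a := by
            rw [hX, Finset.smul_sum]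
            refine Finset.sum_congr rfl fun a _ => ?_
            rw [smul_smul]
          rw [h1, h2, ← Finset.sum_sub_distrib]
          rw [hs', Finset.sum_filter_of_ne]
          · refine Finset.sum_congr rfl fun a _ => ?_
            rw [← sub_smul]
            congr 1
            show (Φ a c - w c) * f a = f a * Φ a c - w c * f a
            ring
          · intro a _ hne0 hac
            apply hne0
            have hga : g a = 0 := by
              show (Φ a c - w c) * f a = 0
              rw [hac, sub_self, zero_mul]
            rw [hga, zero_smul]
        rw [heq]
        exact J.sub_mem (J.mul_mem_right _ _ (J.mul_mem_left _ _ hx)) (qt_smul_mem J _ hx)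
      -- Step 2 : the image of the support shrinks
      have hsub : s'.image Φ ⊆ (s.image Φ).erase w := by
        intro b hb
        obtain ⟨a, ha, rfl⟩ := Finset.mem_image.mp hb
        rw [hs', Finset.mem_filter] at ha
        exact Finset.mem_erase.mpr ⟨fun h => ha.2 (by rw [h]), Finset.mem_image_of_mem Φ ha.1⟩
      have hcard' : (s'.image Φ).card ≤ N := by
        have h1 : ((s.image Φ).erase w).card = (s.image Φ).card - 1 :=
          Finset.card_erase_of_mem (by rw [hw]; exact Finset.mem_image_of_mem Φ ha1)
        have := Finset.card_le_card hsub
        omega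
      -- Step 3 : apply IH
      have hIH := ih s' g hcard' hX' v
      -- Step 4 : the filters agree
      have hss : s'.filter (fun a => Φ a = v) = s.filter (fun a => Φ a = v) := by
        ext a
        rw [hs', Finset.filter_filter]
        constructor
        · intro h; rw [Finset.mem_filter] at h ⊢; exact ⟨h.1, h.2.2⟩
        · intro h
          rw [Finset.mem_filter] at h ⊢
          refine ⟨h.1, fun hac => ?_, h.2⟩
          rw [congrFun h.2 c] at hac
          exact hcne hac.symm
      rw [hss] at hIH
      -- Step 5 : rescale
      have hgf : (∑ a ∈ s.filter (fun a => Φ a = v), g a • y a)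
          = (v c - w c) • ∑ a ∈ s.filter (fun a => Φ a = v), f a • y a := by
        rw [Finset.smul_sum]
        refine Finset.sum_congr rfl fun a ha => ?_
        rw [smul_smul]
        congr 1
        show (Φ a c - w c) * f a = (v c - w c) * f a
        rw [congrFun (Finset.mem_filter.mp ha).2 c]
      have hvw : v c - w c ≠ 0 := sub_ne_zero.mpr (Ne.symm hcne)
      have : ∑ a ∈ s.filter (fun a => Φ a = v), f a • y a
          = (v c - w c)⁻¹ • ∑ a ∈ s.filter (fun a => Φ a = v), g a • y a := by
        rw [hgf, smul_smul, inv_mul_cancel₀ hvw, one_smul]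
      rw [this]
      exact qt_smul_mem J _ hIH


lemma qt_class_mem_span (hindep : LinearIndependent k y)
    (hspan : Submodule.span k (Set.range y) = ⊤) (hone : y 0 = 1)
    (hmul : ∀ a b, y a * y b = (μ a b : k) • y (a + b)) (J : TwoSidedIdeal T)
    (t : Finset (Fin n → ℤ)) (f : (Fin n → ℤ) → k) (a0 : Fin n → ℤ) (_ : a0 ∈ t)
    (hclass : ∀ a ∈ t, (fun c => qtChi μ c a) = (fun c => qtChi μ c a0))
    (hX : (∑ a ∈ t, f a • y a) ∈ J) :
    (∑ a ∈ t, f a • y a) ∈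
      TwoSidedIdeal.span ((J : Set T) ∩ (Subalgebra.center k T : Set T)) := by
  set X : T := ∑ a ∈ t, f a • y a with hXdef
  set z : T := qtInv y μ a0 * X with hzdef
  have hz_sum : z = ∑ a ∈ t,
      ((μ a0 (-a0) : k)⁻¹ * (f a * (μ (-a0) a : k))) • y (-a0 + a) := by
    rw [hzdef, qtInv, smul_mul_assoc, hXdef, Finset.mul_sum, Finset.smul_sum]
    refine Finset.sum_congr rfl fun a _ => ?_
    rw [mul_smul_comm, hmul (-a0) a, smul_smul, smul_smul, mul_assoc]
  have hzC : z ∈ Subalgebra.center k T := by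
    rw [hz_sum]
    refine sum_mem fun a ha => ?_
    refine Subalgebra.smul_mem _ ?_ _
    refine qt_y_central hspan hmul fun c => ?_
    have h1 : qtChi μ c (-a0 + a) = qtChi μ c (-a0) * qtChi μ c a :=
      qtChi_add hindep hmul c (-a0) a
    have h2 : qtChi μ c a = qtChi μ c a0 := congrFun (hclass a ha) c
    have h3 : qtChi μ c (-a0) * qtChi μ c a0 = 1 := by
      rw [← qtChi_add hindep hmul, neg_add_cancel, qtChi_zero hindep hone hmul]
    rw [h1, h2, h3]
  have hzJ : z ∈ J := J.mul_mem_left _ _ hX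
  have hXz : X = y a0 * z := by
    rw [hzdef, ← mul_assoc, qt_mul_inv hone hmul, one_mul]
  rw [hXz]
  exact TwoSidedIdeal.mul_mem_left _ _ _ (TwoSidedIdeal.subset_span ⟨hzJ, hzC⟩)

lemma qt_mem_span (hindep : LinearIndependent k y)
    (hspan : Submodule.span k (Set.range y) = ⊤) (hone : y 0 = 1)
    (hmul : ∀ a b, y a * y b = (μ a b : k) • y (a + b)) (J : TwoSidedIdeal T) :
    ∀ (N : ℕ) (s : Finset (Fin n → ℤ)) (f : (Fin n → ℤ) → k), s.card ≤ N →
      (∑ a ∈ s, f a • y a) ∈ J →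
      (∑ a ∈ s, f a • y a) ∈
        TwoSidedIdeal.span ((J : Set T) ∩ (Subalgebra.center k T : Set T)) := by
  classical
  intro N
  induction N with
  | zero =>
    intro s f hcard hx
    rw [Finset.card_eq_zero.mp (Nat.le_zero.mp hcard)]
    simpa using TwoSidedIdeal.zero_mem _
  | succ N ih =>
    intro s f hcard hx
    rcases s.eq_empty_or_nonempty with rfl | ⟨a0, ha0⟩
    · simpa using TwoSidedIdeal.zero_mem _
    · set v : (Fin n → ℤ) → k := fun c => qtChi μ c a0 with hv
      set p : (Fin n → ℤ) → Prop := fun a => (fun c => qtChi μ c a) = v with hp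
      have hsplit : ∑ a ∈ s, f a • y a =
          (∑ a ∈ s.filter p, f a • y a) + ∑ a ∈ s.filter (fun a => ¬ p a), f a • y a :=
        (Finset.sum_filter_add_sum_filter_not s p _).symm
      have hcomp : (∑ a ∈ s.filter p, f a • y a) ∈ J :=
        qt_comp_mem hindep hone hmul J (s.image (fun a c => qtChi μ c a)).card s f
          le_rfl hx v
      have hrest : (∑ a ∈ s.filter (fun a => ¬ p a), f a • y a) ∈ J := by
        have := J.sub_mem hx hcomp
        rw [hsplit] at this
        simpa using this
      have hlt : (s.filter (fun a => ¬ p a)).card < s.card := by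
        refine Finset.card_lt_card (Finset.filter_ssubset.mpr ⟨a0, ha0, ?_⟩)
        simp [hp, hv]
      have h1 := qt_class_mem_span hindep hspan hone hmul J (s.filter p) f a0
        (Finset.mem_filter.mpr ⟨ha0, by simp [hp, hv]⟩)
        (fun a ha => (Finset.mem_filter.mp ha).2) hcomp
      have h2 := ih (s.filter (fun a => ¬ p a)) f (by omega) hrest
      rw [hsplit]
      exact TwoSidedIdeal.add_mem _ h1 h2

lemma qt_part1 (hindep : LinearIndependent k y)
    (hspan : Submodule.span k (Set.range y) = ⊤) (hone : y 0 = 1)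
    (hmul : ∀ a b, y a * y b = (μ a b : k) • y (a + b)) (J : TwoSidedIdeal T) :
    J = TwoSidedIdeal.span ((J : Set T) ∩ (Subalgebra.center k T : Set T)) := by
  apply le_antisymm
  · rw [TwoSidedIdeal.le_iff]
    intro x hx
    rw [SetLike.mem_coe] at hx
    have hs := qt_repr_sum hindep hspan x
    rw [SetLike.mem_coe, ← hs]
    refine qt_mem_span hindep hspan hone hmul J _ _ _ le_rfl ?_
    rw [hs]; exact hx
  · rw [TwoSidedIdeal.le_iff]
    intro x hx
    rw [SetLike.mem_coe] at hx ⊢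
    exact TwoSidedIdeal.mem_span_iff.mp hx J Set.inter_subset_left


variable (μ) in
/-- projection of `T` onto the span of the central monomials -/
noncomputable def qtPi (hindep : LinearIndependent k y)
    (hspan : Submodule.span k (Set.range y) = ⊤) : T →ₗ[k] T :=
  (qtBasis hindep hspan).constr k (fun a => if ∀ c, qtChi μ c a = 1 then y a else 0)

lemma qtPi_apply_y (hindep : LinearIndependent k y)
    (hspan : Submodule.span k (Set.range y) = ⊤) (a : Fin n → ℤ) :
    qtPi μ hindep hspan (y a) = if ∀ c, qtChi μ c a = 1 then y a else 0 := by
  have : y a = (qtBasis hindep hspan) a := by rw [qtBasis, Module.Basis.mk_apply]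
  rw [qtPi, this, Module.Basis.constr_basis, this]

lemma qtPi_central_fix (hindep : LinearIndependent k y)
    (hspan : Submodule.span k (Set.range y) = ⊤)
    (hmul : ∀ a b, y a * y b = (μ a b : k) • y (a + b))
    {z : T} (hz : z ∈ Subalgebra.center k T) : qtPi μ hindep hspan z = z := by
  conv_lhs => rw [← qt_repr_sum hindep hspan z]
  rw [map_sum]
  conv_rhs => rw [← qt_repr_sum hindep hspan z]
  refine Finset.sum_congr rfl fun a ha => ?_
  rw [map_smul, qtPi_apply_y hindep hspan,
    if_pos (qt_central_supp hindep hspan hmul hz a ha)]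

lemma qtPi_mem_center (hindep : LinearIndependent k y)
    (hspan : Submodule.span k (Set.range y) = ⊤)
    (hmul : ∀ a b, y a * y b = (μ a b : k) • y (a + b)) (x : T) :
    qtPi μ hindep hspan x ∈ Subalgebra.center k T := by
  conv => rw [← qt_repr_sum hindep hspan x]
  rw [map_sum]
  refine sum_mem fun a _ => ?_
  rw [map_smul, qtPi_apply_y hindep hspan]
  refine Subalgebra.smul_mem _ ?_ _
  split_ifs with h
  · exact qt_y_central hspan hmul h
  · exact zero_mem _

lemma qtPi_mul_y (hindep : LinearIndependent k y)
    (hspan : Submodule.span k (Set.range y) = ⊤) (hone : y 0 = 1)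
    (hmul : ∀ a b, y a * y b = (μ a b : k) • y (a + b))
    {z : T} (hz : z ∈ Subalgebra.center k T) (b : Fin n → ℤ) :
    qtPi μ hindep hspan (z * y b) = z * qtPi μ hindep hspan (y b) := by
  classical
  have hzs := qt_repr_sum hindep hspan z
  have hsupp := qt_central_supp hindep hspan hmul hz
  set f := (qtBasis hindep hspan).repr z with hf
  have hprod : z * y b = ∑ a ∈ f.support, (f a * (μ a b : k)) • y (a + b) := by
    conv_lhs => rw [← hzs]
    rw [Finset.sum_mul]
    refine Finset.sum_congr rfl fun a _ => ?_
    rw [smul_mul_assoc, hmul a b, smul_smul]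
  by_cases hb : ∀ c, qtChi μ c b = 1
  · have hab : ∀ a ∈ f.support, ∀ c, qtChi μ c (a + b) = 1 := by
      intro a ha c
      rw [qtChi_add hindep hmul, hsupp a ha c, hb c, one_mul]
    rw [hprod, map_sum, qtPi_apply_y hindep hspan b, if_pos hb, hprod]
    refine Finset.sum_congr rfl fun a ha => ?_
    rw [map_smul, qtPi_apply_y hindep hspan, if_pos (hab a ha)]
  · push_neg at hb
    obtain ⟨c0, hc0⟩ := hb
    have hab : ∀ a ∈ f.support, ¬ (∀ c, qtChi μ c (a + b) = 1) := by
      intro a ha hall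
      apply hc0
      have := hall c0
      rw [qtChi_add hindep hmul, hsupp a ha c0, one_mul] at this
      exact this
    rw [hprod, map_sum, qtPi_apply_y hindep hspan b, if_neg (fun hall => hc0 (hall c0)),
      mul_zero]
    refine Finset.sum_eq_zero fun a ha => ?_
    rw [map_smul, qtPi_apply_y hindep hspan, if_neg (hab a ha), smul_zero]

lemma qtPi_mul_central (hindep : LinearIndependent k y)
    (hspan : Submodule.span k (Set.range y) = ⊤) (hone : y 0 = 1)
    (hmul : ∀ a b, y a * y b = (μ a b : k) • y (a + b))
    {z : T} (hz : z ∈ Subalgebra.center k T) (t : T) :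
    qtPi μ hindep hspan (z * t) = z * qtPi μ hindep hspan t := by
  conv_lhs => rw [← qt_repr_sum hindep hspan t]
  conv_rhs => rw [← qt_repr_sum hindep hspan t]
  rw [Finset.mul_sum, map_sum, map_sum, Finset.mul_sum]
  refine Finset.sum_congr rfl fun b _ => ?_
  rw [mul_smul_comm, map_smul, map_smul, qtPi_mul_y hindep hspan hone hmul hz,
    mul_smul_comm]

lemma qt_part2 (hindep : LinearIndependent k y)
    (hspan : Submodule.span k (Set.range y) = ⊤) (hone : y 0 = 1)
    (hmul : ∀ a b, y a * y b = (μ a b : k) • y (a + b))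
    (I : Ideal (Subalgebra.center k T)) (z : Subalgebra.center k T) :
    z ∈ I ↔ (z : T) ∈ TwoSidedIdeal.span
      (Subtype.val '' (I : Set (Subalgebra.center k T))) := by
  set π := qtPi μ hindep hspan with hπ
  constructor
  · intro hz
    exact TwoSidedIdeal.subset_span ⟨z, hz, rfl⟩
  · intro hz
    set K : TwoSidedIdeal T := TwoSidedIdeal.mk'
      {x | ∀ t u : T, ∃ w ∈ I, π (t * x * u) = (w : T)}
      (fun t u => ⟨0, I.zero_mem, by rw [mul_zero, zero_mul, map_zero]; simp⟩)
      (fun {x₁ x₂} hx₁ hx₂ t u => by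
        obtain ⟨w₁, hw₁, he₁⟩ := hx₁ t u
        obtain ⟨w₂, hw₂, he₂⟩ := hx₂ t u
        exact ⟨w₁ + w₂, I.add_mem hw₁ hw₂, by
          rw [mul_add, add_mul, map_add, he₁, he₂]; simp⟩)
      (fun {x} hx t u => by
        obtain ⟨w, hw, he⟩ := hx t u
        exact ⟨-w, I.neg_mem hw, by
          rw [mul_neg, neg_mul, map_neg, he]; simp⟩)
      (fun {x₁ x₂} hx₂ t u => by
        obtain ⟨w, hw, he⟩ := hx₂ (t * x₁) u
        exact ⟨w, hw, by rw [show t * (x₁ * x₂) * u = t * x₁ * x₂ * u by simp only [mul_assoc]]; exact he⟩)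
      (fun {x₁ x₂} hx₁ t u => by
        obtain ⟨w, hw, he⟩ := hx₁ t (x₂ * u)
        exact ⟨w, hw, by rw [show t * (x₁ * x₂) * u = t * x₁ * (x₂ * u) by simp only [mul_assoc]]; exact he⟩) with hK
    have hsub : Subtype.val '' (I : Set (Subalgebra.center k T)) ⊆ (K : Set T) := by
      rintro - ⟨w₀, hw₀, rfl⟩
      rw [SetLike.mem_coe, hK, TwoSidedIdeal.mem_mk']
      intro t u
      have hcomm : t * (w₀ : T) = (w₀ : T) * t := Subalgebra.mem_center_iff.mp w₀.2 t
      have hrew : t * (w₀ : T) * u = (w₀ : T) * (t * u) := by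
        rw [hcomm, mul_assoc]
      refine ⟨w₀ * ⟨π (t * u), qtPi_mem_center hindep hspan hmul (t * u)⟩,
        Ideal.mul_mem_right _ I hw₀, ?_⟩
      rw [hrew, qtPi_mul_central hindep hspan hone hmul w₀.2]
      rfl
    have hzK := TwoSidedIdeal.mem_span_iff.mp hz K hsub
    rw [hK, TwoSidedIdeal.mem_mk'] at hzK
    obtain ⟨w, hw, hwz⟩ := hzK 1 1
    rw [one_mul, mul_one, qtPi_central_fix hindep hspan hmul z.2] at hwz
    have : z = w := Subtype.ext hwz
    rwa [this]


lemma qt_part3 (hindep : LinearIndependent k y)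
    (hspan : Submodule.span k (Set.range y) = ⊤) (hone : y 0 = 1)
    (hmul : ∀ a b, y a * y b = (μ a b : k) • y (a + b))
    (m : Ideal (Subalgebra.center k T)) (hm : m.IsMaximal) :
    TwoSidedIdeal.span (Subtype.val '' (m : Set (Subalgebra.center k T))) ≠ ⊤ ∧
    ∀ J : TwoSidedIdeal T,
      TwoSidedIdeal.span (Subtype.val '' (m : Set (Subalgebra.center k T))) < J →
      J = ⊤ := by
  constructor
  · intro htop
    have h1 : (1 : T) ∈ TwoSidedIdeal.span
        (Subtype.val '' (m : Set (Subalgebra.center k T))) := by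
      rw [htop]; exact TwoSidedIdeal.mem_top T
    have h1' : ((1 : Subalgebra.center k T) : T) ∈ TwoSidedIdeal.span
        (Subtype.val '' (m : Set (Subalgebra.center k T))) := by simpa using h1
    have := (qt_part2 hindep hspan hone hmul m 1).mpr h1'
    exact hm.ne_top (Ideal.eq_top_of_isUnit_mem m this isUnit_one)
  · intro J hJ
    set Jc : Ideal (Subalgebra.center k T) :=
      { carrier := {w | (w : T) ∈ J}
        add_mem' := fun hx hy => J.add_mem hx hy
        zero_mem' := by simpa using J.zero_mem
        smul_mem' := fun c x hx => by
          have : ((c * x : Subalgebra.center k T) : T) = (c : T) * (x : T) := rfl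
          simpa [smul_eq_mul, this] using J.mul_mem_left (c : T) (x : T) hx } with hJc
    have hmJc : m ≤ Jc := by
      intro w hw
      have : (w : T) ∈ J := hJ.le (TwoSidedIdeal.subset_span ⟨w, hw, rfl⟩)
      exact this
    have hne : m ≠ Jc := by
      intro heq
      have hset : (J : Set T) ∩ (Subalgebra.center k T : Set T)
          = Subtype.val '' (m : Set (Subalgebra.center k T)) := by
        ext x
        constructor
        · rintro ⟨hxJ, hxC⟩
          exact ⟨⟨x, hxC⟩, by rw [heq]; exact hxJ, rfl⟩
        · rintro ⟨w, hw, rfl⟩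
          exact ⟨hmJc hw, w.2⟩
      have := qt_part1 hindep hspan hone hmul J
      rw [hset] at this
      exact absurd this.symm (ne_of_lt hJ)
    have hJctop : Jc = ⊤ := by
      by_contra hJcne
      exact hne (hm.eq_of_le hJcne hmJc)
    have h1 : ((1 : Subalgebra.center k T) : T) ∈ J := by
      have : (1 : Subalgebra.center k T) ∈ Jc := by rw [hJctop]; trivial
      exact this
    exact TwoSidedIdeal.eq_top J (by simpa using h1)

end QT


/-- Proposition (used in the proof of Proposition 6.3 of Goodearl–Launois–Lenagan; see
[BG, Proposition II.3.8]): for a quantum torus `T` over a field `k` (axiomatized by its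
monomial basis `yᵃ`, `a ∈ ℤⁿ`, with `y⁰ = 1` and `yᵃyᵇ = μ(a,b) y^{a+b}`, `μ(a,b) ∈ k*`),
extension and contraction give mutually inverse, inclusion-preserving bijections between
the ideals of the center `Z(T)` and the two-sided ideals of `T`: `I ↦ IT` and
`J ↦ J ∩ Z(T)`. In particular, if `m` is a maximal ideal of `Z(T)` then `mT` is a
maximal two-sided ideal of `T`. -/
theorem quantum_torus_ideal_correspondence
    (k : Type*) [Field k] (n : ℕ)
    (T : Type*) [Ring T] [Algebra k T]
    (y : (Fin n → ℤ) → T)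
    (hindep : LinearIndependent k y)
    (hspan : Submodule.span k (Set.range y) = ⊤)
    (hone : y 0 = 1)
    (μ : (Fin n → ℤ) → (Fin n → ℤ) → kˣ)
    (hmul : ∀ a b, y a * y b = (μ a b : k) • y (a + b)) :
    -- contraction followed by extension recovers every two-sided ideal of `T`
    (∀ J : TwoSidedIdeal T,
      J = TwoSidedIdeal.span ((J : Set T) ∩ (Subalgebra.center k T : Set T))) ∧
    -- extension followed by contraction recovers every ideal of the center
    (∀ I : Ideal (Subalgebra.center k T), ∀ z : Subalgebra.center k T,
      z ∈ I ↔ (z : T) ∈ TwoSidedIdeal.span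
        (Subtype.val '' (I : Set (Subalgebra.center k T)))) ∧
    -- maximal ideals of the center extend to maximal two-sided ideals of `T`
    (∀ m : Ideal (Subalgebra.center k T), m.IsMaximal →
      TwoSidedIdeal.span (Subtype.val '' (m : Set (Subalgebra.center k T))) ≠ ⊤ ∧
      ∀ J : TwoSidedIdeal T,
        TwoSidedIdeal.span (Subtype.val '' (m : Set (Subalgebra.center k T))) < J →
        J = ⊤) := by
  exact ⟨fun J => qt_part1 hindep hspan hone hmul J,
    fun I z => qt_part2 hindep hspan hone hmul I z,
    fun m hm => qt_part3 hindep hspan hone hmul m hm⟩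
end
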